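/- arXiv:1304.7142 — 10 statements merged into one kernel-verified Lean document; each statement's English description precedes it below -/
import Mathlib

section
/- Let N, k ≥ 1 be integers, and let z : ℝ^N → ℝ be measurable with 1 ≤ z₋ ≤ z(x) ≤ z₊ < ∞ for a.e. x ∈ ℝ^N (with Lebesgue measure). Let (η_n) and η be measurable functions from ℝ^N to ℝ^k such that η_n(x) → η(x) for a.e. x ∈ ℝ^N and sup_n ∫_{ℝ^N} |η_n(x)|^{z(x)} dx < ∞. Then ∫_{ℝ^N} |η(x)|^{z(x)} dx < ∞ and ∫_{ℝ^N} ( |η_n(x)|^{z(x)} − |η_n(x) − η(x)|^{z(x)} − |η(x)|^{z(x)} ) dx → 0 as n → ∞. (Brezis–Lieb lemma, first version, for variable exponents.) -/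
open MeasureTheory Filter Topology

private lemma bl_rpow_sub_le {x y p : ℝ} (hy : 0 ≤ y) (hxy : y ≤ x) (hp : 1 ≤ p) :
    x ^ p - y ^ p ≤ p * x ^ (p - 1) * (x - y) := by
  rcases eq_or_lt_of_le (hy.trans hxy) with h0 | hx0
  · have hx : x = 0 := h0.symm
    have hy0 : y = 0 := le_antisymm (hx ▸ hxy) hy
    simp [hx, hy0]
  · set t := y / x with ht
    have ht0 : 0 ≤ t := div_nonneg hy hx0.le
    have ht1 : t ≤ 1 := div_le_one_of_le₀ hxy hx0.le
    have hb := one_add_mul_self_le_rpow_one_add (s := t - 1) (by linarith) hp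
    rw [show (1 : ℝ) + (t - 1) = t by ring] at hb
    have hxp : (0:ℝ) < x ^ p := Real.rpow_pos_of_pos hx0 p
    have htp : t ^ p = y ^ p / x ^ p := Real.div_rpow hy hx0.le p
    have h1 : x ^ p - y ^ p ≤ p * x ^ p * (1 - t) := by
      have h2 : 1 - t ^ p ≤ p * (1 - t) := by linarith
      have h3 : x ^ p * (1 - t ^ p) ≤ x ^ p * (p * (1 - t)) :=
        mul_le_mul_of_nonneg_left h2 hxp.le
      have h4 : x ^ p * t ^ p = y ^ p := by
        rw [htp]
        field_simp
      nlinarith [h3, h4]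
    have h5 : p * x ^ (p - 1) * (x - y) = p * x ^ p * (1 - t) := by
      rw [Real.rpow_sub_one hx0.ne', ht]
      field_simp
    linarith [h1, h5.ge]

private lemma bl_abs_rpow_sub {x y p : ℝ} (hx : 0 ≤ x) (hy : 0 ≤ y) (hp : 1 ≤ p) :
    |x ^ p - y ^ p| ≤ p * max x y ^ (p - 1) * |x - y| := by
  rcases le_total y x with h | h
  · rw [abs_of_nonneg (sub_nonneg.2 (Real.rpow_le_rpow hy h (by linarith))),
      abs_of_nonneg (sub_nonneg.2 h), max_eq_left h]
    exact bl_rpow_sub_le hy h hp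
  · rw [abs_sub_comm, abs_sub_comm x y,
      abs_of_nonneg (sub_nonneg.2 (Real.rpow_le_rpow hx h (by linarith))),
      abs_of_nonneg (sub_nonneg.2 h), max_eq_right h]
    exact bl_rpow_sub_le hx h hp

private lemma bl_add_rpow_le {a b p zp : ℝ} (ha : 0 ≤ a) (hb : 0 ≤ b) (hp : 0 ≤ p)
    (hpzp : p ≤ zp) : (a + b) ^ p ≤ 2 ^ zp * (a ^ p + b ^ p) := by
  have h1 : a + b ≤ 2 * max a b := by
    rcases le_total a b with h | h
    · rw [max_eq_right h]; linarith
    · rw [max_eq_left h]; linarith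
  have hm : 0 ≤ max a b := le_max_of_le_left ha
  calc (a + b) ^ p ≤ (2 * max a b) ^ p := Real.rpow_le_rpow (by linarith) h1 hp
    _ = 2 ^ p * max a b ^ p := Real.mul_rpow (by norm_num) hm
    _ ≤ 2 ^ zp * (a ^ p + b ^ p) := by
        apply mul_le_mul (Real.rpow_le_rpow_of_exponent_le one_le_two hpzp)
        · rcases le_total a b with h | h
          · rw [max_eq_right h]
            exact le_add_of_nonneg_left (Real.rpow_nonneg ha p)
          · rw [max_eq_left h]
            exact le_add_of_nonneg_right (Real.rpow_nonneg hb p)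
        · exact Real.rpow_nonneg hm p
        · positivity

private lemma bl_key {p zp K A B X Y : ℝ} (hp1 : 1 ≤ p) (hpz : p ≤ zp) (hK : 1 ≤ K)
    (hA : 0 ≤ A) (hB : 0 ≤ B) (hX : 0 ≤ X) (hY : 0 ≤ Y)
    (hXA : X ≤ A + B) (hYA : Y ≤ A + B) (hXY : |X - Y| ≤ B) :
    |X ^ p - Y ^ p| ≤ (zp * 2 ^ zp / K) * A ^ p + (zp * 2 ^ zp / K + zp * K ^ zp) * B ^ p := by
  have hzp1 : 1 ≤ zp := hp1.trans hpz
  have hK0 : (0:ℝ) < K := lt_of_lt_of_le one_pos hK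
  have hRA : 0 ≤ (zp * 2 ^ zp / K) * A ^ p := by positivity
  have hRB : 0 ≤ (zp * 2 ^ zp / K) * B ^ p := by positivity
  have hRB2 : 0 ≤ (zp * K ^ zp) * B ^ p := by positivity
  rcases eq_or_lt_of_le hB with hB0 | hB0
  · have hXYeq : X = Y := by
      have h := hXY
      rw [← hB0] at h
      have := abs_nonneg (X - Y)
      have : X - Y = 0 := le_antisymm (le_trans (le_abs_self _) h)
        (by have := neg_abs_le (X - Y); linarith)
      linarith
    rw [hXYeq, sub_self, abs_zero]
    nlinarith
  · have step1 : |X ^ p - Y ^ p| ≤ p * (A + B) ^ (p - 1) * B := by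
      calc |X ^ p - Y ^ p| ≤ p * max X Y ^ (p - 1) * |X - Y| := bl_abs_rpow_sub hX hY hp1
        _ ≤ p * (A + B) ^ (p - 1) * B := by
            apply mul_le_mul _ hXY (abs_nonneg _)
            · positivity
            · apply mul_le_mul_of_nonneg_left _ (by linarith : (0:ℝ) ≤ p)
              exact Real.rpow_le_rpow (le_max_of_le_left hX) (max_le hXA hYA) (by linarith)
    by_cases hcase : A + B ≤ K * B
    · have h2 : (A + B) ^ (p - 1) ≤ (K * B) ^ (p - 1) :=
        Real.rpow_le_rpow (by linarith) hcase (by linarith)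
      have h3 : (K * B) ^ (p - 1) = K ^ (p - 1) * B ^ (p - 1) :=
        Real.mul_rpow hK0.le hB
      have h4 : B ^ (p - 1) * B = B ^ p := by
        rw [Real.rpow_sub_one hB0.ne']; field_simp
      have h5 : K ^ (p - 1) ≤ K ^ zp :=
        Real.rpow_le_rpow_of_exponent_le hK (by linarith)
      have h6 : p * (A + B) ^ (p - 1) * B ≤ zp * K ^ zp * B ^ p := by
        calc p * (A + B) ^ (p - 1) * B ≤ p * (K ^ (p - 1) * B ^ (p - 1)) * B := by
              rw [← h3]
              apply mul_le_mul_of_nonneg_right _ hB0.le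
              exact mul_le_mul_of_nonneg_left h2 (by linarith)
          _ = p * K ^ (p - 1) * B ^ p := by rw [← h4]; ring
          _ ≤ zp * K ^ zp * B ^ p := by
              apply mul_le_mul_of_nonneg_right _ (Real.rpow_nonneg hB p)
              apply mul_le_mul hpz h5 (Real.rpow_nonneg hK0.le _) (by linarith)
      nlinarith [step1]
    · push_neg at hcase
      have hABpos : 0 < A + B := lt_of_le_of_lt (by positivity : (0:ℝ) ≤ K * B) hcase
      have hBle : B ≤ (A + B) / K := by
        rw [le_div_iff₀ hK0]; nlinarith
      have h7 : (A + B) ^ (p - 1) * (A + B) = (A + B) ^ p := by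
        rw [Real.rpow_sub_one hABpos.ne']; field_simp
      have h8 : p * (A + B) ^ (p - 1) * B ≤ zp * ((A + B) ^ p / K) := by
        calc p * (A + B) ^ (p - 1) * B ≤ p * (A + B) ^ (p - 1) * ((A + B) / K) := by
              apply mul_le_mul_of_nonneg_left hBle (by positivity)
          _ = p * ((A + B) ^ p / K) := by rw [← h7]; ring
          _ ≤ zp * ((A + B) ^ p / K) := by
              apply mul_le_mul_of_nonneg_right hpz (by positivity)
      have h9 : (A + B) ^ p ≤ 2 ^ zp * (A ^ p + B ^ p) :=
        bl_add_rpow_le hA hB (by linarith) hpz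
      have h10 : zp * ((A + B) ^ p / K) ≤ zp * 2 ^ zp / K * (A ^ p + B ^ p) := by
        calc zp * ((A + B) ^ p / K) = zp / K * (A + B) ^ p := by ring
          _ ≤ zp / K * (2 ^ zp * (A ^ p + B ^ p)) := by
              apply mul_le_mul_of_nonneg_left h9 (by positivity)
          _ = zp * 2 ^ zp / K * (A ^ p + B ^ p) := by ring
      nlinarith [step1]

set_option maxHeartbeats 1000000

/-- Brezis–Lieb lemma, first version, for variable exponents. -/
theorem brezis_lieb_first_version
    (N k : ℕ) (hN : 1 ≤ N) (hk : 1 ≤ k)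
    (z : EuclideanSpace ℝ (Fin N) → ℝ) (hz : Measurable z)
    (zm zp : ℝ) (hzm : 1 ≤ zm)
    (hzbound : ∀ᵐ x : EuclideanSpace ℝ (Fin N), zm ≤ z x ∧ z x ≤ zp)
    (η : ℕ → EuclideanSpace ℝ (Fin N) → EuclideanSpace ℝ (Fin k))
    (ηlim : EuclideanSpace ℝ (Fin N) → EuclideanSpace ℝ (Fin k))
    (hηm : ∀ n, Measurable (η n)) (hηlimm : Measurable ηlim)
    (hconv : ∀ᵐ x : EuclideanSpace ℝ (Fin N),
      Tendsto (fun n => η n x) atTop (𝓝 (ηlim x)))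
    (hint : ∀ n, Integrable (fun x => ‖η n x‖ ^ z x))
    (hsup : ∃ C : ℝ, ∀ n, ∫ x, ‖η n x‖ ^ z x ≤ C) :
    Integrable (fun x => ‖ηlim x‖ ^ z x) ∧
      Tendsto
        (fun n => ∫ x, (‖η n x‖ ^ z x - ‖η n x - ηlim x‖ ^ z x - ‖ηlim x‖ ^ z x))
        atTop (𝓝 0) := by
  obtain ⟨C, hC⟩ := hsup
  set g : ℕ → EuclideanSpace ℝ (Fin N) → ℝ := fun n x => ‖η n x‖ ^ z x with hg
  set gl : EuclideanSpace ℝ (Fin N) → ℝ := fun x => ‖ηlim x‖ ^ z x with hgl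
  set h : ℕ → EuclideanSpace ℝ (Fin N) → ℝ := fun n x => ‖η n x - ηlim x‖ ^ z x with hh
  have hgm : ∀ n, Measurable (g n) := fun n => (hηm n).norm.pow hz
  have hglm : Measurable gl := hηlimm.norm.pow hz
  have hhm : ∀ n, Measurable (h n) := fun n => ((hηm n).sub hηlimm).norm.pow hz
  have hg0 : ∀ n x, 0 ≤ g n x := fun n x => Real.rpow_nonneg (norm_nonneg _) _
  have hgl0 : ∀ x, 0 ≤ gl x := fun x => Real.rpow_nonneg (norm_nonneg _) _
  have hh0 : ∀ n x, 0 ≤ h n x := fun n x => Real.rpow_nonneg (norm_nonneg _) _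
  set zq : ℝ := max zp 1 with hzq
  have hzq1 : (1:ℝ) ≤ zq := le_max_right _ _
  have hzb' : ∀ᵐ x : EuclideanSpace ℝ (Fin N), 1 ≤ z x ∧ z x ≤ zq := by
    filter_upwards [hzbound] with x hx
    exact ⟨hzm.trans hx.1, hx.2.trans (le_max_left _ _)⟩
  -- pointwise convergence
  have hconv' : ∀ᵐ x : EuclideanSpace ℝ (Fin N),
      Tendsto (fun n => g n x) atTop (𝓝 (gl x)) ∧
        Tendsto (fun n => h n x) atTop (𝓝 0) := by
    filter_upwards [hconv, hzb'] with x hx hzx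
    have h0z : (0:ℝ) ≤ z x := le_trans zero_le_one hzx.1
    constructor
    · exact ((Real.continuousAt_rpow_const _ _ (Or.inr h0z)).tendsto).comp hx.norm
    · have hx0 : Tendsto (fun n => η n x - ηlim x) atTop (𝓝 0) := by
        simpa using hx.sub (tendsto_const_nhds (x := ηlim x))
      have hx0n : Tendsto (fun n => ‖η n x - ηlim x‖) atTop (𝓝 0) := by
        simpa using hx0.norm
      have := ((Real.continuousAt_rpow_const 0 (z x) (Or.inr h0z)).tendsto).comp hx0n
      simpa [Function.comp_def, Real.zero_rpow (by linarith : z x ≠ 0)] using this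
  have hC0 : (0:ℝ) ≤ C :=
    le_trans (integral_nonneg fun x => hg0 0 x) (hC 0)
  -- integrability of the limit, via Fatou
  have hgl_int : Integrable gl := by
    have h1 : ∀ n, ∫⁻ x, ENNReal.ofReal (g n x) ≤ ENNReal.ofReal C := fun n => by
      rw [← ofReal_integral_eq_lintegral_ofReal (hint n)
        (Eventually.of_forall fun x => hg0 n x)]
      exact ENNReal.ofReal_le_ofReal (hC n)
    have h2 : ∫⁻ x, ENNReal.ofReal (gl x) ≤ ENNReal.ofReal C := by
      calc ∫⁻ x, ENNReal.ofReal (gl x)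
          = ∫⁻ x, liminf (fun n => ENNReal.ofReal (g n x)) atTop := by
            apply lintegral_congr_ae
            filter_upwards [hconv'] with x hx
            exact ((ENNReal.tendsto_ofReal hx.1).liminf_eq).symm
        _ ≤ liminf (fun n => ∫⁻ x, ENNReal.ofReal (g n x)) atTop :=
            lintegral_liminf_le fun n => (hgm n).ennreal_ofReal
        _ ≤ ENNReal.ofReal C :=
            (liminf_le_liminf (Eventually.of_forall h1)).trans (le_of_eq (liminf_const _))
    refine ⟨hglm.aestronglyMeasurable, ?_⟩
    rw [hasFiniteIntegral_iff_norm]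
    have : ∀ x, ENNReal.ofReal ‖gl x‖ = ENNReal.ofReal (gl x) := fun x => by
      rw [Real.norm_of_nonneg (hgl0 x)]
    simp only [this]
    exact lt_of_le_of_lt h2 ENNReal.ofReal_lt_top
  refine ⟨hgl_int, ?_⟩
  -- integrability of h n, uniform bound
  have hbd : ∀ n, ∀ᵐ x : EuclideanSpace ℝ (Fin N),
      h n x ≤ 2 ^ zq * (g n x + gl x) := fun n => by
    filter_upwards [hzb'] with x hx
    calc h n x ≤ (‖η n x‖ + ‖ηlim x‖) ^ z x :=
          Real.rpow_le_rpow (norm_nonneg _) (norm_sub_le _ _) (by linarith [hx.1])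
      _ ≤ 2 ^ zq * (‖η n x‖ ^ z x + ‖ηlim x‖ ^ z x) :=
          bl_add_rpow_le (norm_nonneg _) (norm_nonneg _) (by linarith [hx.1]) hx.2
  have hhint : ∀ n, Integrable (h n) := fun n => by
    apply Integrable.mono' (((hint n).add hgl_int).const_mul (2 ^ zq))
      (hhm n).aestronglyMeasurable
    filter_upwards [hbd n] with x hx
    rw [Real.norm_of_nonneg (hh0 n x)]
    exact hx
  set M : ℝ := 2 ^ zq * (C + ∫ x, gl x) with hM
  have hglI0 : 0 ≤ ∫ x, gl x := integral_nonneg hgl0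
  have h2zq : (0:ℝ) < 2 ^ zq := Real.rpow_pos_of_pos two_pos _
  have hM0 : 0 ≤ M := mul_nonneg h2zq.le (by linarith)
  have hMb : ∀ n, ∫ x, h n x ≤ M := fun n => by
    calc ∫ x, h n x ≤ ∫ x, 2 ^ zq * (g n x + gl x) :=
          integral_mono_ae (hhint n) (((hint n).add hgl_int).const_mul (2 ^ zq)) (hbd n)
      _ = 2 ^ zq * ((∫ x, g n x) + ∫ x, gl x) := by
          rw [MeasureTheory.integral_const_mul, integral_add (hint n) hgl_int]
      _ ≤ M := by
          apply mul_le_mul_of_nonneg_left _ h2zq.le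
          linarith [hC n]
  set f : ℕ → EuclideanSpace ℝ (Fin N) → ℝ := fun n x => g n x - h n x - gl x with hf
  have hfint : ∀ n, Integrable (f n) := fun n => ((hint n).sub (hhint n)).sub hgl_int
  -- main estimate: L¹ convergence of f n to 0
  have T : Tendsto (fun n => ∫ x, |f n x|) atTop (𝓝 0) := by
    rw [Metric.tendsto_atTop]
    intro ε hε
    set δ : ℝ := ε / (2 * (M + 1)) with hδdef
    have hδ : 0 < δ := div_pos hε (by linarith)
    set D : ℝ := zq * 2 ^ zq with hD
    have hD0 : 0 < D := mul_pos (by linarith) h2zq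
    set K : ℝ := max 1 (D / δ) with hKdef
    have hK1 : (1:ℝ) ≤ K := le_max_left _ _
    have hK0 : (0:ℝ) < K := lt_of_lt_of_le one_pos hK1
    have hDK : D / K ≤ δ := by
      have h1 : D ≤ δ * K := by
        have h2 : D / δ ≤ K := le_max_right _ _
        calc D = δ * (D / δ) := by field_simp
          _ ≤ δ * K := mul_le_mul_of_nonneg_left h2 hδ.le
      rw [div_le_iff₀ hK0]
      linarith
    set Cε : ℝ := δ + zq * K ^ zq with hCε
    have hKzq : (0:ℝ) ≤ K ^ zq := Real.rpow_nonneg hK0.le _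
    have hCε0 : 0 ≤ Cε := add_nonneg hδ.le (mul_nonneg (by linarith) hKzq)
    set W : ℕ → EuclideanSpace ℝ (Fin N) → ℝ :=
      fun n x => max (|f n x| - δ * h n x) 0 with hW
    have hWmeas : ∀ n, Measurable (W n) := fun n =>
      ((((hgm n).sub (hhm n)).sub hglm).abs.sub ((hhm n).const_mul δ)).max measurable_const
    have hW0 : ∀ n x, 0 ≤ W n x := fun n x => le_max_right _ _
    have hWb : ∀ n, ∀ᵐ x : EuclideanSpace ℝ (Fin N), ‖W n x‖ ≤ (Cε + 1) * gl x := fun n => by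
      filter_upwards [hzb'] with x hx
      have hXA : ‖η n x‖ ≤ ‖η n x - ηlim x‖ + ‖ηlim x‖ := by
        calc ‖η n x‖ = ‖(η n x - ηlim x) + ηlim x‖ := by rw [sub_add_cancel]
          _ ≤ ‖η n x - ηlim x‖ + ‖ηlim x‖ := norm_add_le _ _
      have hYA : ‖η n x - ηlim x‖ ≤ ‖η n x - ηlim x‖ + ‖ηlim x‖ :=
        le_add_of_nonneg_right (norm_nonneg _)
      have hXY : |‖η n x‖ - ‖η n x - ηlim x‖| ≤ ‖ηlim x‖ := by
        have := abs_norm_sub_norm_le (η n x) (η n x - ηlim x)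
        simpa using this
      have key := bl_key (p := z x) (zp := zq) (K := K)
        hx.1 hx.2 hK1 (norm_nonneg (η n x - ηlim x)) (norm_nonneg (ηlim x))
        (norm_nonneg (η n x)) (norm_nonneg (η n x - ηlim x)) hXA hYA hXY
      -- key : |g n x - h n x| ≤ (D/K) h n x + (D/K + zq K^zq) gl x
      have hkey2 : |g n x - h n x| ≤ δ * h n x + Cε * gl x := by
        refine key.trans ?_
        have h1 : zq * 2 ^ zq / K * (‖η n x - ηlim x‖ ^ z x) ≤ δ * h n x :=
          mul_le_mul_of_nonneg_right hDK (hh0 n x)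
        have h2 : (zq * 2 ^ zq / K + zq * K ^ zq) * (‖ηlim x‖ ^ z x) ≤ Cε * gl x := by
          apply mul_le_mul_of_nonneg_right _ (hgl0 x)
          rw [hCε]
          linarith [hDK]
        exact add_le_add h1 h2
      have hfx : |f n x| ≤ δ * h n x + (Cε + 1) * gl x := by
        have := abs_sub (g n x - h n x) (gl x)
        calc |f n x| = |(g n x - h n x) - gl x| := rfl
          _ ≤ |g n x - h n x| + |gl x| := abs_sub _ _
          _ ≤ (δ * h n x + Cε * gl x) + gl x := by
              rw [abs_of_nonneg (hgl0 x)]; linarith [hkey2]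
          _ = δ * h n x + (Cε + 1) * gl x := by ring
      rw [Real.norm_of_nonneg (hW0 n x)]
      apply max_le _ (mul_nonneg (by linarith) (hgl0 x))
      linarith [hfx]
    have hWint : ∀ n, Integrable (W n) := fun n =>
      Integrable.mono' (hgl_int.const_mul (Cε + 1)) (hWmeas n).aestronglyMeasurable (hWb n)
    have hWconv : ∀ᵐ x : EuclideanSpace ℝ (Fin N),
        Tendsto (fun n => W n x) atTop (𝓝 0) := by
      filter_upwards [hconv'] with x hx
      have hf0 : Tendsto (fun n => f n x) atTop (𝓝 0) := by
        have := (hx.1.sub hx.2).sub (tendsto_const_nhds (x := gl x))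
        simpa using this
      have h1 : Tendsto (fun n => |f n x| - δ * h n x) atTop (𝓝 0) := by
        have := hf0.abs.sub (hx.2.const_mul δ)
        simpa using this
      have := h1.max (tendsto_const_nhds (x := (0:ℝ)))
      simpa using this
    have hWT : Tendsto (fun n => ∫ x, W n x) atTop (𝓝 0) := by
      have := tendsto_integral_of_dominated_convergence (fun x => (Cε + 1) * gl x)
        (fun n => (hWmeas n).aestronglyMeasurable) (hgl_int.const_mul (Cε + 1)) hWb hWconv
      simpa using this
    rw [Metric.tendsto_atTop] at hWT
    obtain ⟨N₀, hN₀⟩ := hWT (ε / 2) (half_pos hε)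
    refine ⟨N₀, fun n hn => ?_⟩
    have hWn : ∫ x, W n x < ε / 2 := by
      have := hN₀ n hn
      rwa [Real.dist_eq, sub_zero, abs_of_nonneg (integral_nonneg (hW0 n))] at this
    have hfle : ∫ x, |f n x| ≤ (∫ x, W n x) + δ * ∫ x, h n x := by
      calc ∫ x, |f n x| ≤ ∫ x, (W n x + δ * h n x) := by
            apply integral_mono (hfint n).abs ((hWint n).add ((hhint n).const_mul δ))
            intro x
            have := le_max_left (|f n x| - δ * h n x) 0
            have hh1 : 0 ≤ δ * h n x := mul_nonneg hδ.le (hh0 n x)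
            simp only [Pi.add_apply]
            linarith [this]
        _ = (∫ x, W n x) + δ * ∫ x, h n x := by
            rw [integral_add (hWint n) ((hhint n).const_mul δ), MeasureTheory.integral_const_mul]
    have hδM : δ * ∫ x, h n x ≤ δ * M := mul_le_mul_of_nonneg_left (hMb n) hδ.le
    have hδM2 : δ * M < ε / 2 := by
      have : δ * (M + 1) = ε / 2 := by
        rw [hδdef]; field_simp
      nlinarith
    rw [Real.dist_eq, sub_zero, abs_of_nonneg (integral_nonneg fun x => abs_nonneg _)]
    linarith
  -- conclude by squeezing
  have habs : ∀ n, |∫ x, f n x| ≤ ∫ x, |f n x| := fun n => by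
    simpa [Real.norm_eq_abs] using norm_integral_le_integral_norm (f n) (μ := volume)
  have hTneg : Tendsto (fun n => -∫ x, |f n x|) atTop (𝓝 0) := by
    simpa using T.neg
  refine tendsto_of_tendsto_of_tendsto_of_le_of_le hTneg T ?_ ?_
  · intro n
    have := habs n
    have h2 := neg_abs_le (∫ x, f n x)
    simp only [hf] at this ⊢
    linarith
  · intro n
    have := habs n
    have h2 := le_abs_self (∫ x, f n x)
    simp only [hf] at this ⊢
    linarith
end

section
/- Let N, k ≥ 1 be integers, and let z : ℝ^N → ℝ be measurable with 1 < z₋ ≤ z(x) ≤ z₊ < ∞ for a.e. x ∈ ℝ^N (with Lebesgue measure). Let (η_n) and η be measurable functions from ℝ^N to ℝ^k such that η_n(x) → η(x) for a.e. x ∈ ℝ^N and sup_n ∫_{ℝ^N} |η_n(x)|^{z(x)} dx < ∞. Then η_n converges weakly to η in L^{z(x)}(ℝ^N, ℝ^k); concretely, for every measurable v : ℝ^N → ℝ^k with ∫_{ℝ^N} |v(x)|^{z'(x)} dx < ∞, where z'(x) = z(x)/(z(x)−1), one has ∫_{ℝ^N} ⟨η_n(x), v(x)⟩ dx → ∫_{ℝ^N}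 ⟨η(x), v(x)⟩ dx as n → ∞. (Brezis–Lieb lemma, second version, for variable exponents.) -/
open MeasureTheory Filter Topology

lemma young_eps {a b p zm ε : ℝ} (ha : 0 ≤ a) (hb : 0 ≤ b) (hzm : 1 < zm) (hpm : zm ≤ p)
    (hε : 0 < ε) (hε1 : ε ≤ 1) :
    a * b ≤ ε * a ^ p + ε ^ (-(1/(zm-1))) * b ^ (p/(p-1)) := by
  have hp : 1 < p := lt_of_lt_of_le hzm hpm
  set q := p / (p - 1) with hq
  have hpq : p.HolderConjugate q := Real.HolderConjugate.conjExponent hp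
  have key : a * b = (ε ^ (1/p) * a) * (ε ^ (-(1/p)) * b) := by
    rw [mul_mul_mul_comm, ← Real.rpow_add hε]; simp
  have y : (ε ^ (1/p) * a) * (ε ^ (-(1/p)) * b)
      ≤ (ε ^ (1/p) * a) ^ p / p + (ε ^ (-(1/p)) * b) ^ q / q :=
    Real.young_inequality_of_nonneg
      (mul_nonneg (Real.rpow_nonneg hε.le _) ha) (mul_nonneg (Real.rpow_nonneg hε.le _) hb) hpq
  have e1 : (ε ^ (1/p) * a) ^ p = ε * a ^ p := by
    rw [Real.mul_rpow (Real.rpow_nonneg hε.le _) ha, ← Real.rpow_mul hε.le,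
      one_div_mul_cancel hpq.ne_zero, Real.rpow_one]
  have e2 : (ε ^ (-(1/p)) * b) ^ q = ε ^ (-(q/p)) * b ^ q := by
    rw [Real.mul_rpow (Real.rpow_nonneg hε.le _) hb, ← Real.rpow_mul hε.le]
    ring_nf
  have hqp : q / p = 1 / (p - 1) := by
    rw [hq, div_div, mul_comm (p-1) p, ← div_div, div_self (by positivity)]
  have e3 : ε ^ (-(q/p)) ≤ ε ^ (-(1/(zm-1))) := by
    apply Real.rpow_le_rpow_of_exponent_ge hε hε1
    rw [hqp, neg_le_neg_iff]
    apply one_div_le_one_div_of_le (by linarith) (by linarith)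
  calc a * b = (ε ^ (1/p) * a) * (ε ^ (-(1/p)) * b) := key
    _ ≤ (ε ^ (1/p) * a) ^ p / p + (ε ^ (-(1/p)) * b) ^ q / q := y
    _ ≤ (ε ^ (1/p) * a) ^ p + (ε ^ (-(1/p)) * b) ^ q := by
        gcongr
        · exact div_le_self (by positivity) hp.le
        · exact div_le_self (by positivity) hpq.symm.lt.le
    _ = ε * a ^ p + ε ^ (-(q/p)) * b ^ q := by rw [e1, e2]
    _ ≤ ε * a ^ p + ε ^ (-(1/(zm-1))) * b ^ q :=
        add_le_add_right (mul_le_mul_of_nonneg_right e3 (Real.rpow_nonneg hb _)) _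

lemma add_rpow_le_two_rpow {A B p zp : ℝ} (hA : 0 ≤ A) (hB : 0 ≤ B) (hp : 0 ≤ p)
    (hpzp : p ≤ zp) : (A + B) ^ p ≤ 2 ^ zp * (A ^ p + B ^ p) := by
  have h1 : A + B ≤ 2 * max A B := by
    rcases le_total A B with h | h
    · rw [max_eq_right h]; linarith
    · rw [max_eq_left h]; linarith
  calc (A + B) ^ p ≤ (2 * max A B) ^ p := Real.rpow_le_rpow (by positivity) h1 hp
    _ = 2 ^ p * (max A B) ^ p := Real.mul_rpow (by norm_num) (le_max_of_le_left hA)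
    _ ≤ 2 ^ zp * (A ^ p + B ^ p) := by
        apply mul_le_mul (Real.rpow_le_rpow_of_exponent_le one_le_two hpzp) ?_
          (by positivity) (by positivity)
        rcases le_total A B with h | h
        · rw [max_eq_right h]; exact le_add_of_nonneg_left (Real.rpow_nonneg hA _)
        · rw [max_eq_left h]; exact le_add_of_nonneg_right (Real.rpow_nonneg hB _)

/-- Brezis–Lieb lemma, second version, for variable exponents:
weak convergence in `L^{z(x)}`, tested against any `v ∈ L^{z'(x)}`. -/
theorem brezis_lieb_second_version
    (N k : ℕ) (hN : 1 ≤ N) (hk : 1 ≤ k)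
    (z : EuclideanSpace ℝ (Fin N) → ℝ) (hz : Measurable z)
    (zm zp : ℝ) (hzm : 1 < zm)
    (hzbound : ∀ᵐ x : EuclideanSpace ℝ (Fin N), zm ≤ z x ∧ z x ≤ zp)
    (η : ℕ → EuclideanSpace ℝ (Fin N) → EuclideanSpace ℝ (Fin k))
    (ηlim : EuclideanSpace ℝ (Fin N) → EuclideanSpace ℝ (Fin k))
    (hηm : ∀ n, Measurable (η n)) (hηlimm : Measurable ηlim)
    (hconv : ∀ᵐ x : EuclideanSpace ℝ (Fin N),
      Tendsto (fun n => η n x) atTop (𝓝 (ηlim x)))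
    (hint : ∀ n, Integrable (fun x => ‖η n x‖ ^ z x))
    (hsup : ∃ C : ℝ, ∀ n, ∫ x, ‖η n x‖ ^ z x ≤ C) :
    ∀ v : EuclideanSpace ℝ (Fin N) → EuclideanSpace ℝ (Fin k),
      Measurable v →
      Integrable (fun x => ‖v x‖ ^ (z x / (z x - 1))) →
      Tendsto (fun n => ∫ x, (inner ℝ (η n x) (v x) : ℝ)) atTop
        (𝓝 (∫ x, (inner ℝ (ηlim x) (v x) : ℝ))) := by
  intro v hvm hvV
  obtain ⟨C, hC⟩ := hsup
  have hCnn : 0 ≤ C :=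
    le_trans (integral_nonneg fun x => Real.rpow_nonneg (norm_nonneg _) _) (hC 0)
  have hFm : ∀ n, Measurable fun x => ‖η n x‖ ^ z x := fun n => (hηm n).norm.pow hz
  have hFlm : Measurable fun x => ‖ηlim x‖ ^ z x := hηlimm.norm.pow hz
  have hFconv : ∀ᵐ x : EuclideanSpace ℝ (Fin N),
      Tendsto (fun n => ‖η n x‖ ^ z x) atTop (𝓝 (‖ηlim x‖ ^ z x)) := by
    filter_upwards [hconv, hzbound] with x hx hb
    have h0 : (0:ℝ) ≤ z x := by linarith [hb.1]
    exact (Real.continuousAt_rpow_const _ _ (Or.inr h0)).tendsto.comp hx.norm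
  -- Fatou: the limit has integral ≤ C
  have hFlim_lint : ∫⁻ x, ENNReal.ofReal (‖ηlim x‖ ^ z x) ≤ ENNReal.ofReal C := by
    have hle : ∀ n, ∫⁻ x, ENNReal.ofReal (‖η n x‖ ^ z x) ≤ ENNReal.ofReal C := by
      intro n
      rw [← ofReal_integral_eq_lintegral_ofReal (hint n)
        (Eventually.of_forall fun x => Real.rpow_nonneg (norm_nonneg _) _)]
      exact ENNReal.ofReal_le_ofReal (hC n)
    calc ∫⁻ x, ENNReal.ofReal (‖ηlim x‖ ^ z x)
        = ∫⁻ x, Filter.liminf (fun n => ENNReal.ofReal (‖η n x‖ ^ z x)) atTop := by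
          apply lintegral_congr_ae
          filter_upwards [hFconv] with x hx
          exact ((ENNReal.tendsto_ofReal hx).liminf_eq).symm
      _ ≤ Filter.liminf (fun n => ∫⁻ x, ENNReal.ofReal (‖η n x‖ ^ z x)) atTop :=
          lintegral_liminf_le fun n => (hFm n).ennreal_ofReal
      _ ≤ Filter.liminf (fun _ => ENNReal.ofReal C) atTop :=
          Filter.liminf_le_liminf (Eventually.of_forall hle)
      _ = ENNReal.ofReal C := Filter.liminf_const _
  have hFlim_int : Integrable fun x => ‖ηlim x‖ ^ z x := by
    refine ⟨hFlm.aestronglyMeasurable, ?_⟩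
    rw [hasFiniteIntegral_iff_ofReal
      (Eventually.of_forall fun x => Real.rpow_nonneg (norm_nonneg _) _)]
    exact lt_of_le_of_lt hFlim_lint ENNReal.ofReal_lt_top
  set Cl := ∫ x, ‖ηlim x‖ ^ z x with hCl
  have hClnn : 0 ≤ Cl := integral_nonneg fun x => Real.rpow_nonneg (norm_nonneg _) _
  -- G n x = ‖η n x - ηlim x‖ ^ z x
  have hGm : ∀ n, Measurable fun x => ‖η n x - ηlim x‖ ^ z x :=
    fun n => ((hηm n).sub hηlimm).norm.pow hz
  have hGle : ∀ n, ∀ᵐ x : EuclideanSpace ℝ (Fin N),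
      ‖η n x - ηlim x‖ ^ z x ≤ 2 ^ zp * (‖η n x‖ ^ z x + ‖ηlim x‖ ^ z x) := by
    intro n; filter_upwards [hzbound] with x hb
    have h0 : (0:ℝ) ≤ z x := by linarith [hb.1]
    calc ‖η n x - ηlim x‖ ^ z x ≤ (‖η n x‖ + ‖ηlim x‖) ^ z x :=
        Real.rpow_le_rpow (norm_nonneg _) (norm_sub_le _ _) h0
      _ ≤ 2 ^ zp * (‖η n x‖ ^ z x + ‖ηlim x‖ ^ z x) :=
        add_rpow_le_two_rpow (norm_nonneg _) (norm_nonneg _) h0 hb.2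
  have hGint : ∀ n, Integrable fun x => ‖η n x - ηlim x‖ ^ z x := by
    intro n
    refine Integrable.mono' (((hint n).add hFlim_int).const_mul (2 ^ zp))
      (hGm n).aestronglyMeasurable ?_
    filter_upwards [hGle n] with x hx
    rwa [Real.norm_eq_abs, abs_of_nonneg (Real.rpow_nonneg (norm_nonneg _) _)]
  set M := 2 ^ zp * (C + Cl) with hM
  have hMnn : 0 ≤ M := by positivity
  have hGbound : ∀ n, ∫ x, ‖η n x - ηlim x‖ ^ z x ≤ M := by
    intro n
    calc ∫ x, ‖η n x - ηlim x‖ ^ z x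
        ≤ ∫ x, 2 ^ zp * (‖η n x‖ ^ z x + ‖ηlim x‖ ^ z x) :=
          integral_mono_ae (hGint n) (((hint n).add hFlim_int).const_mul _) (hGle n)
      _ = 2 ^ zp * ((∫ x, ‖η n x‖ ^ z x) + Cl) := by
          rw [integral_const_mul, integral_add (hint n) hFlim_int]
      _ ≤ M := by rw [hM]; gcongr; exact hC n
  -- integrability of the inner products
  have hinner_int : ∀ w : EuclideanSpace ℝ (Fin N) → EuclideanSpace ℝ (Fin k),
      Measurable w → Integrable (fun x => ‖w x‖ ^ z x) →
      Integrable fun x => (inner ℝ (w x) (v x) : ℝ) := by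
    intro w hwm hwint
    refine Integrable.mono' (hwint.add hvV) (hwm.inner hvm).aestronglyMeasurable ?_
    filter_upwards [hzbound] with x hb
    have hp : 1 < z x := lt_of_lt_of_le hzm hb.1
    have hpq : (z x).HolderConjugate (z x / (z x - 1)) := .conjExponent hp
    calc ‖(inner ℝ (w x) (v x) : ℝ)‖ ≤ ‖w x‖ * ‖v x‖ := abs_real_inner_le_norm _ _
      _ ≤ ‖w x‖ ^ z x / z x + ‖v x‖ ^ (z x / (z x - 1)) / (z x / (z x - 1)) :=
        Real.young_inequality_of_nonneg (norm_nonneg _) (norm_nonneg _) hpq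
      _ ≤ ‖w x‖ ^ z x + ‖v x‖ ^ (z x / (z x - 1)) :=
        add_le_add (div_le_self (by positivity) hp.le)
          (div_le_self (by positivity) hpq.symm.lt.le)
  -- integrability of the products
  have hPint : ∀ n, Integrable fun x => ‖η n x - ηlim x‖ * ‖v x‖ := by
    intro n
    refine Integrable.mono' ((hGint n).add hvV)
      (((hηm n).sub hηlimm).norm.mul hvm.norm).aestronglyMeasurable ?_
    filter_upwards [hzbound] with x hb
    have hp : 1 < z x := lt_of_lt_of_le hzm hb.1
    have hpq : (z x).HolderConjugate (z x / (z x - 1)) := .conjExponent hp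
    rw [Real.norm_eq_abs, abs_of_nonneg (by positivity)]
    calc ‖η n x - ηlim x‖ * ‖v x‖
        ≤ ‖η n x - ηlim x‖ ^ z x / z x + ‖v x‖ ^ (z x / (z x - 1)) / (z x / (z x - 1)) :=
        Real.young_inequality_of_nonneg (norm_nonneg _) (norm_nonneg _) hpq
      _ ≤ ‖η n x - ηlim x‖ ^ z x + ‖v x‖ ^ (z x / (z x - 1)) :=
        add_le_add (div_le_self (by positivity) hp.le)
          (div_le_self (by positivity) hpq.symm.lt.le)
  -- main step : the L¹ norm of the product tends to 0
  have hA : Tendsto (fun n => ∫ x, ‖η n x - ηlim x‖ * ‖v x‖) atTop (𝓝 0) := by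
    rw [Metric.tendsto_atTop]
    intro δ hδ
    set ε := min (δ / (2 * (M + 1))) 1 with hεdef
    have hε : 0 < ε := lt_min (by positivity) one_pos
    have hε1 : ε ≤ 1 := min_le_right _ _
    have hεM : ε * M ≤ δ / 2 := by
      calc ε * M ≤ (δ / (2 * (M + 1))) * (M + 1) :=
          mul_le_mul (min_le_left _ _) (by linarith) hMnn (by positivity)
        _ = δ / 2 := by field_simp
    set Cε := ε ^ (-(1/(zm-1))) with hCε
    have hCεnn : 0 ≤ Cε := Real.rpow_nonneg hε.le _
    set g : ℕ → EuclideanSpace ℝ (Fin N) → ℝ :=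
      fun n x => max (‖η n x - ηlim x‖ * ‖v x‖ - ε * ‖η n x - ηlim x‖ ^ z x) 0 with hg
    have hgint : ∀ n, Integrable (g n) :=
      fun n => ((hPint n).sub ((hGint n).const_mul ε)).pos_part
    have hgle : ∀ n, ∀ᵐ x : EuclideanSpace ℝ (Fin N),
        ‖g n x‖ ≤ Cε * ‖v x‖ ^ (z x / (z x - 1)) := by
      intro n; filter_upwards [hzbound] with x hb
      rw [Real.norm_eq_abs, abs_of_nonneg (le_max_right _ _)]
      apply max_le ?_ (by positivity)
      have := young_eps (norm_nonneg (η n x - ηlim x)) (norm_nonneg (v x)) hzm hb.1 hε hε1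
      rw [← hCε] at this
      linarith
    have hgconv : ∀ᵐ x : EuclideanSpace ℝ (Fin N), Tendsto (fun n => g n x) atTop (𝓝 0) := by
      filter_upwards [hconv] with x hx
      have h1 : Tendsto (fun n => ‖η n x - ηlim x‖ * ‖v x‖) atTop (𝓝 0) := by
        have h0 : Tendsto (fun n => η n x - ηlim x) atTop (𝓝 (ηlim x - ηlim x)) :=
          hx.sub tendsto_const_nhds
        rw [sub_self] at h0
        have h2 := h0.norm.mul_const ‖v x‖
        simpa using h2
      refine tendsto_of_tendsto_of_tendsto_of_le_of_le tendsto_const_nhds h1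
        (fun n => le_max_right _ _) (fun n => ?_)
      exact max_le (sub_le_self _ (by positivity)) (by positivity)
    have hgtend : Tendsto (fun n => ∫ x, g n x) atTop (𝓝 0) := by
      have := tendsto_integral_of_dominated_convergence
        (fun x => Cε * ‖v x‖ ^ (z x / (z x - 1))) (fun n => (hgint n).1)
        (hvV.const_mul Cε) hgle hgconv
      simpa using this
    obtain ⟨n₀, hn₀⟩ := Metric.tendsto_atTop.mp hgtend (δ/2) (by positivity)
    refine ⟨n₀, fun n hn => ?_⟩
    have h1 : ∫ x, g n x < δ/2 := by
      have := hn₀ n hn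
      rw [Real.dist_eq, sub_zero] at this
      exact lt_of_abs_lt this
    have h2 : ∫ x, ‖η n x - ηlim x‖ * ‖v x‖ ≤ (∫ x, g n x) + ε * M := by
      calc ∫ x, ‖η n x - ηlim x‖ * ‖v x‖
          ≤ ∫ x, (g n x + ε * ‖η n x - ηlim x‖ ^ z x) := by
            apply integral_mono_ae (hPint n) ((hgint n).add ((hGint n).const_mul ε))
            apply Eventually.of_forall
            intro x
            have := le_max_left (‖η n x - ηlim x‖ * ‖v x‖ - ε * ‖η n x - ηlim x‖ ^ z x) 0
            simp only [hg, Pi.add_apply]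
            linarith
        _ = (∫ x, g n x) + ε * ∫ x, ‖η n x - ηlim x‖ ^ z x := by
            rw [integral_add (hgint n) ((hGint n).const_mul ε), integral_const_mul]
        _ ≤ (∫ x, g n x) + ε * M := by gcongr; exact hGbound n
    rw [Real.dist_eq, sub_zero,
      abs_of_nonneg (integral_nonneg fun x => by positivity)]
    linarith
  -- conclusion
  have hdiff : ∀ n, |(∫ x, (inner ℝ (η n x) (v x) : ℝ)) - ∫ x, (inner ℝ (ηlim x) (v x) : ℝ)|
      ≤ ∫ x, ‖η n x - ηlim x‖ * ‖v x‖ := by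
    intro n
    have hin := hinner_int (η n) (hηm n) (hint n)
    have hil := hinner_int ηlim hηlimm hFlim_int
    have hsubint : Integrable
        (fun x => (inner ℝ (η n x) (v x) : ℝ) - inner ℝ (ηlim x) (v x)) volume := hin.sub hil
    rw [← integral_sub hin hil]
    calc |∫ x, ((inner ℝ (η n x) (v x) : ℝ) - inner ℝ (ηlim x) (v x))|
        ≤ ∫ x, |(inner ℝ (η n x) (v x) : ℝ) - inner ℝ (ηlim x) (v x)| := by
          simpa [Real.norm_eq_abs] using norm_integral_le_integral_norm
            (μ := (volume : Measure (EuclideanSpace ℝ (Fin N))))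
            (fun x => (inner ℝ (η n x) (v x) : ℝ) - inner ℝ (ηlim x) (v x))
      _ ≤ ∫ x, ‖η n x - ηlim x‖ * ‖v x‖ := by
          apply integral_mono hsubint.abs (hPint n)
          intro x
          show |(inner ℝ (η n x) (v x) : ℝ) - inner ℝ (ηlim x) (v x)| ≤ ‖η n x - ηlim x‖ * ‖v x‖
          rw [← inner_sub_left]
          exact abs_real_inner_le_norm _ _
  rw [tendsto_iff_dist_tendsto_zero]
  refine squeeze_zero (fun n => dist_nonneg) (fun n => ?_) hA
  rw [Real.dist_eq]
  exact hdiff n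
end

section
/- Let N, k ≥ 1 be integers, and let z : ℝ^N → ℝ be measurable with 1 < z₋ ≤ z(x) ≤ z₊ < ∞ for a.e. x ∈ ℝ^N (with Lebesgue measure). Let (η_n) and η be measurable functions from ℝ^N to ℝ^k such that η_n(x) → η(x) for a.e. x ∈ ℝ^N and sup_n ∫_{ℝ^N} |η_n(x)|^{z(x)} dx < ∞. Then, with z'(x) = z(x)/(z(x)−1), the integral over the region where 1 < z(x) < 2 satisfies ∫_{{x ∈ ℝ^N : 1 < z(x) < 2}} | |η_n(x)|^{z(x)−2} η_n(x) − |η_n(x)−η(x)|^{z(x)−2} (η_n(x)−η(x)) − |η(x)|^{z(x)−2} η(x) |^{z'(x)} dx → 0 as n → ∞. -/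
open MeasureTheory Filter Topology

section aux

variable {E : Type*} [NormedAddCommGroup E] [NormedSpace ℝ E]

lemma Tnorm_eq {α : ℝ} (hα : 0 < α) (u : E) :
    ‖(‖u‖ ^ (α - 1)) • u‖ = ‖u‖ ^ α := by
  by_cases hu : u = 0
  · simp [hu, Real.zero_rpow hα.ne']
  · rw [norm_smul, Real.norm_of_nonneg (Real.rpow_nonneg (norm_nonneg u) _),
      ← Real.rpow_add_one (norm_ne_zero_iff.2 hu), sub_add_cancel]

lemma holder_aux {α : ℝ} (hα0 : 0 < α) (hα1 : α ≤ 1) (u v : E) (hvu : ‖v‖ ≤ ‖u‖) :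
    ‖(‖u‖ ^ (α - 1)) • u - (‖v‖ ^ (α - 1)) • v‖ ≤ 2 * ‖u - v‖ ^ α := by
  by_cases huv : u = v
  · simp [huv, Real.zero_rpow hα0.ne']
  rcases le_or_gt ‖u‖ ‖u - v‖ with h | h
  · calc ‖(‖u‖ ^ (α - 1)) • u - (‖v‖ ^ (α - 1)) • v‖
        ≤ ‖(‖u‖ ^ (α - 1)) • u‖ + ‖(‖v‖ ^ (α - 1)) • v‖ := norm_sub_le _ _
      _ = ‖u‖ ^ α + ‖v‖ ^ α := by rw [Tnorm_eq hα0, Tnorm_eq hα0]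
      _ ≤ ‖u - v‖ ^ α + ‖u - v‖ ^ α :=
          add_le_add (Real.rpow_le_rpow (norm_nonneg u) h hα0.le)
            (Real.rpow_le_rpow (norm_nonneg v) (hvu.trans h) hα0.le)
      _ = 2 * ‖u - v‖ ^ α := by ring
  · have hv0 : v ≠ 0 := by rintro rfl; simp at h
    have ha0 : (0 : ℝ) < ‖u‖ := lt_of_le_of_lt (norm_nonneg _) h
    have hb0 : (0 : ℝ) < ‖v‖ := norm_pos_iff.2 hv0
    have hc0 : (0 : ℝ) < ‖u - v‖ := norm_sub_pos_iff.2 huv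
    set a : ℝ := ‖u‖ with ha
    set b : ℝ := ‖v‖ with hb
    set c : ℝ := ‖u - v‖ with hc
    set A : ℝ := a ^ (α - 1) with hA
    set B : ℝ := b ^ (α - 1) with hB
    have hAnn : 0 ≤ A := Real.rpow_nonneg ha0.le _
    have hAB : A ≤ B := Real.rpow_le_rpow_of_nonpos hb0 hvu (by linarith)
    have hid : (‖u‖ ^ (α - 1)) • u - (‖v‖ ^ (α - 1)) • v = A • (u - v) + (A - B) • v := by
      rw [smul_sub, sub_smul]; abel
    have f0 : ‖(‖u‖ ^ (α - 1)) • u - (‖v‖ ^ (α - 1)) • v‖ ≤ A * c + (B - A) * b := by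
      rw [hid]
      calc ‖A • (u - v) + (A - B) • v‖ ≤ ‖A • (u - v)‖ + ‖(A - B) • v‖ := norm_add_le _ _
        _ = A * c + (B - A) * b := by
            rw [norm_smul, norm_smul, Real.norm_of_nonneg hAnn, Real.norm_eq_abs,
              abs_of_nonpos (by linarith), neg_sub]
    have f1 : A * c ≤ c ^ α := by
      have h1 : A ≤ c ^ (α - 1) := Real.rpow_le_rpow_of_nonpos hc0 h.le (by linarith)
      calc A * c ≤ c ^ (α - 1) * c := mul_le_mul_of_nonneg_right h1 hc0.le
        _ = c ^ α := by rw [← Real.rpow_add_one hc0.ne' (α - 1), sub_add_cancel]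
    have f2 : a ^ α ≤ A * c + A * b := by
      have h1 : a ≤ b + c := by
        have := norm_sub_norm_le u v
        rw [← ha, ← hb, ← hc] at this; linarith
      have h2 : A * a ≤ A * (b + c) := mul_le_mul_of_nonneg_left h1 hAnn
      have h3 : A * a = a ^ α := by
        rw [hA, ← Real.rpow_add_one ha0.ne' (α - 1), sub_add_cancel]
      nlinarith
    have f3 : B * b = b ^ α := by
      rw [hB, ← Real.rpow_add_one hb0.ne' (α - 1), sub_add_cancel]
    have f4 : b ^ α ≤ a ^ α := Real.rpow_le_rpow hb0.le hvu hα0.le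
    nlinarith [f0, f1, f2, f3, f4]

lemma holder_ineq {α : ℝ} (hα0 : 0 < α) (hα1 : α ≤ 1) (u v : E) :
    ‖(‖u‖ ^ (α - 1)) • u - (‖v‖ ^ (α - 1)) • v‖ ≤ 2 * ‖u - v‖ ^ α := by
  rcases le_total ‖v‖ ‖u‖ with h | h
  · exact holder_aux hα0 hα1 u v h
  · rw [norm_sub_rev, norm_sub_rev u v]
    exact holder_aux hα0 hα1 v u h

end aux

/-- Brezis–Lieb lemma, third version, for variable exponents. -/
theorem brezis_lieb_third_version_region_one
    (N k : ℕ) (hN : 1 ≤ N) (hk : 1 ≤ k)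
    (z : EuclideanSpace ℝ (Fin N) → ℝ) (hz : Measurable z)
    (zm zp : ℝ) (hzm : 1 < zm)
    (hzbound : ∀ᵐ x : EuclideanSpace ℝ (Fin N), zm ≤ z x ∧ z x ≤ zp)
    (η : ℕ → EuclideanSpace ℝ (Fin N) → EuclideanSpace ℝ (Fin k))
    (ηlim : EuclideanSpace ℝ (Fin N) → EuclideanSpace ℝ (Fin k))
    (hηm : ∀ n, Measurable (η n)) (hηlimm : Measurable ηlim)
    (hconv : ∀ᵐ x : EuclideanSpace ℝ (Fin N),
      Tendsto (fun n => η n x) atTop (𝓝 (ηlim x)))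
    (hint : ∀ n, Integrable (fun x => ‖η n x‖ ^ z x))
    (hsup : ∃ C : ℝ, ∀ n, ∫ x, ‖η n x‖ ^ z x ≤ C) :
    Tendsto
      (fun n => ∫ x in {x : EuclideanSpace ℝ (Fin N) | 1 < z x ∧ z x < 2},
        ‖(‖η n x‖ ^ (z x - 2)) • η n x
          - (‖η n x - ηlim x‖ ^ (z x - 2)) • (η n x - ηlim x)
          - (‖ηlim x‖ ^ (z x - 2)) • ηlim x‖ ^ (z x / (z x - 1)))
      atTop (𝓝 0) := by
  obtain ⟨C, hC⟩ := hsup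
  set S : Set (EuclideanSpace ℝ (Fin N)) := {x | 1 < z x ∧ z x < 2} with hSdef
  have hS : MeasurableSet S := by
    have : S = {x | 1 < z x} ∩ {x | z x < 2} := rfl
    rw [this]
    exact (measurableSet_lt measurable_const hz).inter (measurableSet_lt hz measurable_const)
  have hzm0 : (0 : ℝ) < zm := by linarith
  -- integrability of the limit power function
  have hlimm : Measurable fun x => ‖ηlim x‖ ^ z x := hηlimm.norm.pow hz
  have hnn : ∀ n, ∀ᵐ x : EuclideanSpace ℝ (Fin N), 0 ≤ ‖η n x‖ ^ z x :=
    fun n => Eventually.of_forall fun x => Real.rpow_nonneg (norm_nonneg _) _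
  have htendpow : ∀ᵐ x : EuclideanSpace ℝ (Fin N),
      Tendsto (fun n => ‖η n x‖ ^ z x) atTop (𝓝 (‖ηlim x‖ ^ z x)) := by
    filter_upwards [hconv, hzbound] with x hcx hbx
    have hzx : (0 : ℝ) ≤ z x := by linarith [hbx.1]
    exact (Real.continuousAt_rpow_const _ _ (Or.inr hzx)).tendsto.comp hcx.norm
  have hlimint : Integrable fun x => ‖ηlim x‖ ^ z x := by
    refine ⟨hlimm.aestronglyMeasurable, ?_⟩
    rw [hasFiniteIntegral_iff_ofReal
      (Eventually.of_forall fun x => Real.rpow_nonneg (norm_nonneg _) _)]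
    have heq : ∀ᵐ x : EuclideanSpace ℝ (Fin N),
        ENNReal.ofReal (‖ηlim x‖ ^ z x)
          = liminf (fun n => ENNReal.ofReal (‖η n x‖ ^ z x)) atTop := by
      filter_upwards [htendpow] with x hx
      exact ((ENNReal.tendsto_ofReal hx).liminf_eq).symm
    calc ∫⁻ x, ENNReal.ofReal (‖ηlim x‖ ^ z x)
        = ∫⁻ x, liminf (fun n => ENNReal.ofReal (‖η n x‖ ^ z x)) atTop :=
          lintegral_congr_ae heq
      _ ≤ liminf (fun n => ∫⁻ x, ENNReal.ofReal (‖η n x‖ ^ z x)) atTop :=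
          lintegral_liminf_le fun n => ((hηm n).norm.pow hz).ennreal_ofReal
      _ ≤ ENNReal.ofReal C := by
          have hle : ∀ n, (∫⁻ x, ENNReal.ofReal (‖η n x‖ ^ z x)) ≤ ENNReal.ofReal C := by
            intro n
            rw [← ofReal_integral_eq_lintegral_ofReal (hint n) (hnn n)]
            exact ENNReal.ofReal_le_ofReal (hC n)
          calc liminf (fun n => ∫⁻ x, ENNReal.ofReal (‖η n x‖ ^ z x)) atTop
              ≤ liminf (fun _ : ℕ => ENNReal.ofReal C) atTop :=
                liminf_le_liminf (Eventually.of_forall hle)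
            _ = ENNReal.ofReal C := liminf_const _
      _ < ⊤ := ENNReal.ofReal_lt_top
  set M : ℝ := zm / (zm - 1) with hM
  set bound : EuclideanSpace ℝ (Fin N) → ℝ := fun x => (3 : ℝ) ^ M * ‖ηlim x‖ ^ z x
    with hbound
  have hboundint : Integrable bound (volume.restrict S) :=
    (hlimint.const_mul _).restrict
  -- measurability of the integrands
  have hFm : ∀ n, AEStronglyMeasurable
      (fun x => ‖(‖η n x‖ ^ (z x - 2)) • η n x
          - (‖η n x - ηlim x‖ ^ (z x - 2)) • (η n x - ηlim x)
          - (‖ηlim x‖ ^ (z x - 2)) • ηlim x‖ ^ (z x / (z x - 1)))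
      (volume.restrict S) := by
    intro n
    have m1 : Measurable fun x => (‖η n x‖ ^ (z x - 2)) • η n x :=
      ((hηm n).norm.pow (hz.sub measurable_const)).smul (hηm n)
    have m2 : Measurable fun x => (‖η n x - ηlim x‖ ^ (z x - 2)) • (η n x - ηlim x) :=
      (((hηm n).sub hηlimm).norm.pow (hz.sub measurable_const)).smul ((hηm n).sub hηlimm)
    have m3 : Measurable fun x => (‖ηlim x‖ ^ (z x - 2)) • ηlim x :=
      (hηlimm.norm.pow (hz.sub measurable_const)).smul hηlimm
    exact (((m1.sub m2).sub m3).norm.pow (hz.div (hz.sub measurable_const))).aestronglyMeasurable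
  have e2 : ∀ r : ℝ, r - 2 = r - 1 - 1 := fun r => by ring
  -- the bound
  have h_bound : ∀ n, ∀ᵐ x ∂volume.restrict S,
      ‖‖(‖η n x‖ ^ (z x - 2)) • η n x
          - (‖η n x - ηlim x‖ ^ (z x - 2)) • (η n x - ηlim x)
          - (‖ηlim x‖ ^ (z x - 2)) • ηlim x‖ ^ (z x / (z x - 1))‖ ≤ bound x := by
    intro n
    filter_upwards [ae_restrict_of_ae hzbound, ae_restrict_mem hS] with x hzb hxS
    obtain ⟨hp1, hp2⟩ := hxS
    set p : ℝ := z x with hp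
    set α : ℝ := p - 1 with hα
    have hα0 : 0 < α := by simp only [hα]; linarith
    have hα1 : α ≤ 1 := by simp only [hα]; linarith
    set p' : ℝ := p / (p - 1) with hp'
    have hp'0 : 0 < p' := div_pos (by linarith) (by linarith)
    have hXle : ‖(‖η n x‖ ^ (p - 2)) • η n x
          - (‖η n x - ηlim x‖ ^ (p - 2)) • (η n x - ηlim x)
          - (‖ηlim x‖ ^ (p - 2)) • ηlim x‖ ≤ 3 * ‖ηlim x‖ ^ α := by
      simp only [e2 p, ← hα]
      calc ‖(‖η n x‖ ^ (α - 1)) • η n x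
            - (‖η n x - ηlim x‖ ^ (α - 1)) • (η n x - ηlim x)
            - (‖ηlim x‖ ^ (α - 1)) • ηlim x‖
          ≤ ‖(‖η n x‖ ^ (α - 1)) • η n x
              - (‖η n x - ηlim x‖ ^ (α - 1)) • (η n x - ηlim x)‖
            + ‖(‖ηlim x‖ ^ (α - 1)) • ηlim x‖ := norm_sub_le _ _
        _ ≤ 2 * ‖η n x - (η n x - ηlim x)‖ ^ α + ‖ηlim x‖ ^ α := by
            gcongr
            · exact holder_ineq hα0 hα1 _ _
            · exact (Tnorm_eq hα0 _).le
        _ = 3 * ‖ηlim x‖ ^ α := by rw [sub_sub_cancel]; ring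
    have hnorm_eq : ‖‖(‖η n x‖ ^ (p - 2)) • η n x
          - (‖η n x - ηlim x‖ ^ (p - 2)) • (η n x - ηlim x)
          - (‖ηlim x‖ ^ (p - 2)) • ηlim x‖ ^ p'‖
        = ‖(‖η n x‖ ^ (p - 2)) • η n x
          - (‖η n x - ηlim x‖ ^ (p - 2)) • (η n x - ηlim x)
          - (‖ηlim x‖ ^ (p - 2)) • ηlim x‖ ^ p' :=
      Real.norm_of_nonneg (Real.rpow_nonneg (norm_nonneg _) _)
    rw [hnorm_eq]
    have hp'M : p' ≤ M := by
      rw [hp', hM, div_le_div_iff₀ (by linarith) (by linarith)]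
      nlinarith [hzb.1]
    calc ‖(‖η n x‖ ^ (p - 2)) • η n x
          - (‖η n x - ηlim x‖ ^ (p - 2)) • (η n x - ηlim x)
          - (‖ηlim x‖ ^ (p - 2)) • ηlim x‖ ^ p'
        ≤ (3 * ‖ηlim x‖ ^ α) ^ p' := Real.rpow_le_rpow (norm_nonneg _) hXle hp'0.le
      _ = (3 : ℝ) ^ p' * (‖ηlim x‖ ^ α) ^ p' :=
          Real.mul_rpow (by norm_num) (Real.rpow_nonneg (norm_nonneg _) _)
      _ = (3 : ℝ) ^ p' * ‖ηlim x‖ ^ (α * p') := by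
          rw [← Real.rpow_mul (norm_nonneg _)]
      _ = (3 : ℝ) ^ p' * ‖ηlim x‖ ^ p := by
          congr 1
          congr 1
          rw [hp', ← hα]
          field_simp
      _ ≤ (3 : ℝ) ^ M * ‖ηlim x‖ ^ p :=
          mul_le_mul_of_nonneg_right
            (Real.rpow_le_rpow_of_exponent_le (by norm_num) hp'M)
            (Real.rpow_nonneg (norm_nonneg _) _)
  -- pointwise convergence to 0
  have h_lim : ∀ᵐ x ∂volume.restrict S,
      Tendsto (fun n => ‖(‖η n x‖ ^ (z x - 2)) • η n x
          - (‖η n x - ηlim x‖ ^ (z x - 2)) • (η n x - ηlim x)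
          - (‖ηlim x‖ ^ (z x - 2)) • ηlim x‖ ^ (z x / (z x - 1)))
        atTop (𝓝 0) := by
    filter_upwards [ae_restrict_of_ae hconv, ae_restrict_mem hS] with x hcx hxS
    obtain ⟨hp1, hp2⟩ := hxS
    set p : ℝ := z x with hp
    set α : ℝ := p - 1 with hα
    have hα0 : 0 < α := by simp only [hα]; linarith
    have hα1 : α ≤ 1 := by simp only [hα]; linarith
    set p' : ℝ := p / (p - 1) with hp'
    have hp'0 : 0 < p' := div_pos (by linarith) (by linarith)
    have h1 : Tendsto (fun n => ‖η n x - ηlim x‖) atTop (𝓝 0) := by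
      have := (hcx.sub (tendsto_const_nhds (x := ηlim x))).norm
      simpa using this
    have h2 : Tendsto (fun n => ‖η n x - ηlim x‖ ^ α) atTop (𝓝 0) := by
      have := (Real.continuousAt_rpow_const 0 α (Or.inr hα0.le)).tendsto.comp h1
      simpa [Real.zero_rpow hα0.ne', Function.comp_def] using this
    have hXn : ∀ m : ℕ, ‖(‖η m x‖ ^ (p - 2)) • η m x
          - (‖η m x - ηlim x‖ ^ (p - 2)) • (η m x - ηlim x)
          - (‖ηlim x‖ ^ (p - 2)) • ηlim x‖ ≤ 3 * ‖η m x - ηlim x‖ ^ α := by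
      intro m
      simp only [e2 p, ← hα]
      calc ‖(‖η m x‖ ^ (α - 1)) • η m x
            - (‖η m x - ηlim x‖ ^ (α - 1)) • (η m x - ηlim x)
            - (‖ηlim x‖ ^ (α - 1)) • ηlim x‖
          = ‖((‖η m x‖ ^ (α - 1)) • η m x - (‖ηlim x‖ ^ (α - 1)) • ηlim x)
            - (‖η m x - ηlim x‖ ^ (α - 1)) • (η m x - ηlim x)‖ := by
            rw [sub_right_comm]
        _ ≤ ‖(‖η m x‖ ^ (α - 1)) • η m x - (‖ηlim x‖ ^ (α - 1)) • ηlim x‖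
            + ‖(‖η m x - ηlim x‖ ^ (α - 1)) • (η m x - ηlim x)‖ := norm_sub_le _ _
        _ ≤ 2 * ‖η m x - ηlim x‖ ^ α + ‖η m x - ηlim x‖ ^ α := by
            gcongr
            · exact holder_ineq hα0 hα1 _ _
            · exact (Tnorm_eq hα0 _).le
        _ = 3 * ‖η m x - ηlim x‖ ^ α := by ring
    have hX0 : Tendsto (fun m => ‖(‖η m x‖ ^ (p - 2)) • η m x
          - (‖η m x - ηlim x‖ ^ (p - 2)) • (η m x - ηlim x)
          - (‖ηlim x‖ ^ (p - 2)) • ηlim x‖) atTop (𝓝 0) := by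
      apply squeeze_zero (fun m => norm_nonneg _) hXn
      have := h2.const_mul (3 : ℝ)
      simpa using this
    have := (Real.continuousAt_rpow_const 0 p' (Or.inr hp'0.le)).tendsto.comp hX0
    simpa [Real.zero_rpow hp'0.ne', Function.comp_def] using this
  have hmain := tendsto_integral_of_dominated_convergence
    (μ := volume.restrict S) bound hFm hboundint h_bound h_lim
  simpa using hmain
end

section
/- Let N, k ≥ 1 be integers, and let z : ℝ^N → ℝ be measurable with 1 < z₋ ≤ z(x) ≤ z₊ < ∞ for a.e. x ∈ ℝ^N (with Lebesgue measure). Let (η_n) and η be measurable functions from ℝ^N to ℝ^k such that η_n(x) → η(x) for a.e. x ∈ ℝ^N and sup_n ∫_{ℝ^N} |η_n(x)|^{z(x)} dx < ∞. Then, with z'(x) = z(x)/(z(x)−1), the integral over the region where z(x) ≥ 2 satisfies ∫_{{x ∈ ℝ^N : z(x) ≥ 2}} | |η_n(x)|^{z(x)−2} η_n(x) − |η_n(x)−η(x)|^{z(x)−2} (η_n(x)−η(x)) − |η(x)|^{z(x)−2} η(x) |^{z'(x)} dx → 0 as n → ∞. -/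
open MeasureTheory Filter Topology Asymptotics

section Aux

variable {E : Type*} [NormedAddCommGroup E] [InnerProductSpace ℝ E]

noncomputable def mapF (p : ℝ) (y : E) : E := ‖y‖ ^ (p - 2) • y

lemma mapF_zero (p : ℝ) : mapF p (0 : E) = 0 := by simp [mapF]

lemma norm_mapF (p : ℝ) (hp : 2 ≤ p) (y : E) : ‖mapF p y‖ = ‖y‖ ^ (p - 1) := by
  rcases eq_or_ne y 0 with rfl | hy
  · simp [mapF_zero, Real.zero_rpow (show p - 1 ≠ 0 by linarith)]
  · rw [mapF, norm_smul, Real.norm_rpow_of_nonneg (norm_nonneg y), norm_norm,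
      show p - 1 = (p - 2) + 1 by ring, Real.rpow_add_one (norm_ne_zero_iff.mpr hy)]

lemma mapF_deriv (p : ℝ) (hp : 2 < p) (y : E) :
    ∃ D : E →L[ℝ] E, HasFDerivAt (mapF p) D y ∧ ‖D‖ ≤ (p - 1) * ‖y‖ ^ (p - 2) := by
  rcases eq_or_ne y 0 with rfl | hy
  · refine ⟨0, ?_, by simp [Real.zero_rpow (show p - 2 ≠ 0 by linarith)]⟩
    rw [hasFDerivAt_iff_isLittleO_nhds_zero]
    simp only [zero_add, mapF_zero, ContinuousLinearMap.zero_apply, sub_zero]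
    rw [← isLittleO_norm_left, ← isLittleO_norm_right]
    have hfun : (fun h : E => ‖mapF p h‖) = fun h : E => ‖h‖ ^ (p - 2) * ‖h‖ := by
      funext h
      rw [norm_mapF p hp.le, show p - 1 = (p - 2) + 1 by ring,
        Real.rpow_add' (norm_nonneg _) (by linarith), Real.rpow_one]
    rw [hfun]
    have h1 : (fun h : E => ‖h‖ ^ (p - 2)) =o[𝓝 0] (fun _ : E => (1 : ℝ)) := by
      rw [isLittleO_const_iff one_ne_zero]
      have := (tendsto_norm_zero (E := E)).rpow_const (p := p - 2) (Or.inr (by linarith))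
      simpa [Real.zero_rpow (show p - 2 ≠ 0 by linarith)] using this
    have h2 : (fun h : E => ‖h‖) =O[𝓝 0] (fun h : E => ‖h‖) := isBigO_refl _ _
    simpa using h1.mul_isBigO h2
  · have hny : ‖y‖ ≠ 0 := norm_ne_zero_iff.mpr hy
    have hnorm : HasFDerivAt (fun w : E => ‖w‖) (fderiv ℝ (Norm.norm : E → ℝ) y) y :=
      ((contDiffAt_norm ℝ hy).differentiableAt one_ne_zero).hasFDerivAt
    have hNle : ‖fderiv ℝ (Norm.norm : E → ℝ) y‖ ≤ 1 := by
      have := norm_fderiv_le_of_lipschitz ℝ (lipschitzWith_one_norm (E := E)) (x₀ := y)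
      simpa using this
    have hr : HasDerivAt (fun t : ℝ => t ^ (p - 2)) ((p - 2) * ‖y‖ ^ (p - 2 - 1)) ‖y‖ :=
      Real.hasDerivAt_rpow_const (Or.inl hny)
    have hc : HasFDerivAt (fun w : E => ‖w‖ ^ (p - 2))
        (((p - 2) * ‖y‖ ^ (p - 2 - 1)) • fderiv ℝ (Norm.norm : E → ℝ) y) y :=
      hr.comp_hasFDerivAt y hnorm
    refine ⟨(‖y‖ ^ (p - 2)) • ContinuousLinearMap.id ℝ E +
      (((p - 2) * ‖y‖ ^ (p - 2 - 1)) • fderiv ℝ (Norm.norm : E → ℝ) y).smulRight y,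
      hc.smul (hasFDerivAt_id y), ?_⟩
    have hpow : ‖y‖ ^ (p - 2 - 1) * ‖y‖ = ‖y‖ ^ (p - 2) := by
      rw [← Real.rpow_add_one hny]; ring_nf
    apply ContinuousLinearMap.opNorm_le_bound _
      (mul_nonneg (by linarith) (Real.rpow_nonneg (norm_nonneg y) _))
    intro w
    have e : ((‖y‖ ^ (p - 2)) • ContinuousLinearMap.id ℝ E +
        (((p - 2) * ‖y‖ ^ (p - 2 - 1)) • fderiv ℝ (Norm.norm : E → ℝ) y).smulRight y) w
        = (‖y‖ ^ (p - 2)) • w +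
          ((p - 2) * ‖y‖ ^ (p - 2 - 1) * (fderiv ℝ (Norm.norm : E → ℝ) y w)) • y := by
      simp [ContinuousLinearMap.smul_apply, ContinuousLinearMap.smulRight_apply, smul_smul]
    rw [e]
    have b1 : ‖(‖y‖ ^ (p - 2)) • w‖ = ‖y‖ ^ (p - 2) * ‖w‖ := by
      rw [norm_smul, Real.norm_eq_abs, abs_of_nonneg (Real.rpow_nonneg (norm_nonneg y) _)]
    have bN : |fderiv ℝ (Norm.norm : E → ℝ) y w| ≤ ‖w‖ := by
      calc |fderiv ℝ (Norm.norm : E → ℝ) y w| = ‖fderiv ℝ (Norm.norm : E → ℝ) y w‖ :=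
            (Real.norm_eq_abs _).symm
        _ ≤ ‖fderiv ℝ (Norm.norm : E → ℝ) y‖ * ‖w‖ := ContinuousLinearMap.le_opNorm _ _
        _ ≤ 1 * ‖w‖ := mul_le_mul_of_nonneg_right hNle (norm_nonneg w)
        _ = ‖w‖ := one_mul _
    have b2 : ‖((p - 2) * ‖y‖ ^ (p - 2 - 1) * (fderiv ℝ (Norm.norm : E → ℝ) y w)) • y‖
        ≤ (p - 2) * ‖y‖ ^ (p - 2) * ‖w‖ := by
      rw [norm_smul, Real.norm_eq_abs, abs_mul, abs_mul,
        abs_of_nonneg (by linarith : (0:ℝ) ≤ p - 2),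
        abs_of_nonneg (Real.rpow_nonneg (norm_nonneg y) _)]
      calc (p - 2) * ‖y‖ ^ (p - 2 - 1) * |fderiv ℝ (Norm.norm : E → ℝ) y w| * ‖y‖
          ≤ (p - 2) * ‖y‖ ^ (p - 2 - 1) * ‖w‖ * ‖y‖ := by
            apply mul_le_mul_of_nonneg_right _ (norm_nonneg y)
            exact mul_le_mul_of_nonneg_left bN
              (mul_nonneg (by linarith) (Real.rpow_nonneg (norm_nonneg y) _))
        _ = (p - 2) * (‖y‖ ^ (p - 2 - 1) * ‖y‖) * ‖w‖ := by ring
        _ = (p - 2) * ‖y‖ ^ (p - 2) * ‖w‖ := by rw [hpow]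
    calc ‖(‖y‖ ^ (p - 2)) • w +
          ((p - 2) * ‖y‖ ^ (p - 2 - 1) * (fderiv ℝ (Norm.norm : E → ℝ) y w)) • y‖
        ≤ ‖(‖y‖ ^ (p - 2)) • w‖ +
          ‖((p - 2) * ‖y‖ ^ (p - 2 - 1) * (fderiv ℝ (Norm.norm : E → ℝ) y w)) • y‖ :=
          norm_add_le _ _
      _ ≤ ‖y‖ ^ (p - 2) * ‖w‖ + (p - 2) * ‖y‖ ^ (p - 2) * ‖w‖ := by
          rw [b1]; exact add_le_add le_rfl b2
      _ = (p - 1) * ‖y‖ ^ (p - 2) * ‖w‖ := by ring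

lemma mapF_cont (p : ℝ) (hp : 2 ≤ p) : Continuous (mapF (E := E) p) := by
  rcases eq_or_lt_of_le hp with rfl | hp2
  · have : mapF (E := E) 2 = id := by
      funext y; simp [mapF, show (2 : ℝ) - 2 = 0 by norm_num]
    rw [this]; exact continuous_id
  · have hd : Differentiable ℝ (mapF (E := E) p) :=
      fun y => (mapF_deriv p hp2 y).choose_spec.1.differentiableAt
    exact hd.continuous

lemma mapF_lip (p : ℝ) (hp : 2 ≤ p) (u v : E) :
    ‖mapF p u - mapF p v‖ ≤ (p - 1) * (‖u‖ + ‖v‖) ^ (p - 2) * ‖u - v‖ := by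
  rcases eq_or_lt_of_le hp with rfl | hp2
  · have h2 : mapF (E := E) 2 = id := by
      funext y; simp [mapF, show (2 : ℝ) - 2 = 0 by norm_num]
    have e : ((2:ℝ) - 1) * (‖u‖ + ‖v‖) ^ ((2:ℝ) - 2) * ‖u - v‖ = ‖u - v‖ := by
      rw [show (2:ℝ) - 2 = 0 by norm_num, Real.rpow_zero]; ring
    rw [h2, e]; simp
  · have hmem_u : u ∈ Metric.closedBall (0 : E) (‖u‖ + ‖v‖) := by
      rw [Metric.mem_closedBall, dist_zero_right]
      linarith [norm_nonneg v]
    have hmem_v : v ∈ Metric.closedBall (0 : E) (‖u‖ + ‖v‖) := by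
      rw [Metric.mem_closedBall, dist_zero_right]
      linarith [norm_nonneg u]
    have key := (convex_closedBall (0 : E) (‖u‖ + ‖v‖)).norm_image_sub_le_of_norm_hasFDerivWithin_le
      (f := mapF p) (f' := fun x => (mapF_deriv p hp2 x).choose)
      (C := (p - 1) * (‖u‖ + ‖v‖) ^ (p - 2))
      (fun x _ => (mapF_deriv p hp2 x).choose_spec.1.hasFDerivWithinAt)
      (fun x hx => by
        refine le_trans (mapF_deriv p hp2 x).choose_spec.2 ?_
        have hxle : ‖x‖ ≤ ‖u‖ + ‖v‖ := by
          rw [Metric.mem_closedBall, dist_zero_right] at hx; exact hx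
        exact mul_le_mul_of_nonneg_left
          (Real.rpow_le_rpow (norm_nonneg x) hxle (by linarith)) (by linarith))
      hmem_v hmem_u
    calc ‖mapF p u - mapF p v‖ ≤ (p - 1) * (‖u‖ + ‖v‖) ^ (p - 2) * ‖u - v‖ := key

lemma add_rpow_le (x y q : ℝ) (hx : 0 ≤ x) (hy : 0 ≤ y) (hq : 0 ≤ q) :
    (x + y) ^ q ≤ 2 ^ q * (x ^ q + y ^ q) := by
  have h1 : x + y ≤ 2 * max x y := by
    rcases le_total x y with h | h
    · rw [max_eq_right h]; linarith
    · rw [max_eq_left h]; linarith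
  calc (x + y) ^ q ≤ (2 * max x y) ^ q :=
        Real.rpow_le_rpow (by positivity) h1 hq
    _ = 2 ^ q * (max x y) ^ q := Real.mul_rpow (by norm_num) (le_max_of_le_left hx)
    _ ≤ 2 ^ q * (x ^ q + y ^ q) := by
        apply mul_le_mul_of_nonneg_left _ (Real.rpow_nonneg (by norm_num) q)
        rcases max_cases x y with ⟨h, _⟩ | ⟨h, _⟩ <;> rw [h]
        · linarith [Real.rpow_nonneg hy q]
        · linarith [Real.rpow_nonneg hx q]

lemma mapF_eps (P : ℝ) (hP : 2 ≤ P) {ε : ℝ} (hε : 0 < ε) (hε1 : ε ≤ 1) :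
    ∃ C : ℝ, 0 ≤ C ∧ ∀ p : ℝ, 2 ≤ p → p ≤ P → ∀ a b : E,
      ‖mapF p a - mapF p (a - b) - mapF p b‖ ^ (p / (p - 1))
        ≤ ε * ‖a - b‖ ^ p + C * ‖b‖ ^ p := by
  have h3P : (0 : ℝ) < 3 ^ P := Real.rpow_pos_of_pos (by norm_num) P
  set K : ℝ := P * 3 ^ P + 1 with hK
  have hK1 : (1 : ℝ) ≤ K := by nlinarith
  set δ : ℝ := ε / (4 * K) with hδ
  have hδpos : 0 < δ := by
    apply div_pos hε; linarith
  have hδ1 : δ ≤ 1 := by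
    rw [hδ, div_le_one (by linarith)]; nlinarith
  have hKδ : K * δ = ε / 4 := by
    rw [hδ]; field_simp
  have h3δ : (1 : ℝ) ≤ 3 / δ := by
    rw [le_div_iff₀ hδpos]; linarith
  have h3δP : (0 : ℝ) < (3 / δ) ^ P := Real.rpow_pos_of_pos (by positivity) P
  set K' : ℝ := P * (3 / δ) ^ P + 1 with hK'
  have hK'1 : (1 : ℝ) ≤ K' := by
    rw [hK']
    linarith [mul_pos (show (0:ℝ) < P by linarith) h3δP]
  refine ⟨4 * K' ^ (2 : ℝ), by positivity, ?_⟩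
  intro p hp2 hpP a b
  have hp1 : (1 : ℝ) ≤ p - 1 := by linarith
  set q := p / (p - 1) with hq
  have hq1 : 1 ≤ q := by rw [hq, le_div_iff₀ (by linarith)]; linarith
  have hq2 : q ≤ 2 := by rw [hq, div_le_iff₀ (by linarith)]; linarith
  set A := ‖a - b‖ with hA
  set B := ‖b‖ with hB
  have hA0 : (0 : ℝ) ≤ A := norm_nonneg _
  have hB0 : (0 : ℝ) ≤ B := norm_nonneg _
  have hApow : A ^ (p - 2) * A = A ^ (p - 1) := by
    rw [show p - 1 = (p - 2) + 1 by ring, Real.rpow_add' hA0 (by linarith), Real.rpow_one]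
  have hBpow : B ^ (p - 2) * B = B ^ (p - 1) := by
    rw [show p - 1 = (p - 2) + 1 by ring, Real.rpow_add' hB0 (by linarith), Real.rpow_one]
  -- step 1
  have step1 : ‖mapF p a - mapF p (a - b) - mapF p b‖
      ≤ (p - 1) * (2 * A + B) ^ (p - 2) * B + B ^ (p - 1) := by
    have e1 : ‖mapF p a - mapF p (a - b) - mapF p b‖
        ≤ ‖mapF p a - mapF p (a - b)‖ + ‖mapF p b‖ := norm_sub_le _ _
    have e2 := mapF_lip p hp2 a (a - b)
    rw [show a - (a - b) = b by abel] at e2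
    have e3 : (p - 1) * (‖a‖ + ‖a - b‖) ^ (p - 2) * ‖b‖
        ≤ (p - 1) * (2 * A + B) ^ (p - 2) * B := by
      apply mul_le_mul_of_nonneg_right _ hB0
      apply mul_le_mul_of_nonneg_left _ (by linarith)
      apply Real.rpow_le_rpow (by positivity) _ (by linarith)
      have : ‖a‖ ≤ A + B := by
        calc ‖a‖ = ‖(a - b) + b‖ := by rw [sub_add_cancel]
          _ ≤ ‖a - b‖ + ‖b‖ := norm_add_le _ _
      linarith
    rw [norm_mapF p hp2 b] at e1
    linarith
  -- unified bound
  have hT : ‖mapF p a - mapF p (a - b) - mapF p b‖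
      ≤ K * δ * A ^ (p - 1) + K' * B ^ (p - 1) := by
    rcases le_or_gt B (δ * A) with hcase | hcase
    · have f1 : (2 * A + B) ^ (p - 2) ≤ 3 ^ P * A ^ (p - 2) := by
        calc (2 * A + B) ^ (p - 2) ≤ (3 * A) ^ (p - 2) := by
              apply Real.rpow_le_rpow (by positivity) _ (by linarith)
              nlinarith
          _ = 3 ^ (p - 2) * A ^ (p - 2) := Real.mul_rpow (by norm_num) hA0
          _ ≤ 3 ^ P * A ^ (p - 2) := by
              apply mul_le_mul_of_nonneg_right _ (Real.rpow_nonneg hA0 _)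
              exact Real.rpow_le_rpow_of_exponent_le (by norm_num) (by linarith)
      have f2 : B ^ (p - 1) ≤ δ * A ^ (p - 1) := by
        calc B ^ (p - 1) ≤ (δ * A) ^ (p - 1) := Real.rpow_le_rpow hB0 hcase (by linarith)
          _ = δ ^ (p - 1) * A ^ (p - 1) := Real.mul_rpow hδpos.le hA0
          _ ≤ δ * A ^ (p - 1) := by
              apply mul_le_mul_of_nonneg_right _ (Real.rpow_nonneg hA0 _)
              have h := Real.rpow_le_rpow_of_exponent_ge hδpos hδ1 hp1
              rwa [Real.rpow_one] at h
      have t1 : (p - 1) * (2 * A + B) ^ (p - 2) * B ≤ P * 3 ^ P * δ * A ^ (p - 1) := by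
        calc (p - 1) * (2 * A + B) ^ (p - 2) * B
            ≤ P * (3 ^ P * A ^ (p - 2)) * (δ * A) := by
              apply mul_le_mul _ hcase hB0 _
              · apply mul_le_mul (by linarith) f1 (Real.rpow_nonneg (by positivity) _)
                  (by linarith)
              · positivity
          _ = P * 3 ^ P * δ * (A ^ (p - 2) * A) := by ring
          _ = P * 3 ^ P * δ * A ^ (p - 1) := by rw [hApow]
      have hrest : 0 ≤ K' * B ^ (p - 1) :=
        mul_nonneg (by linarith) (Real.rpow_nonneg hB0 _)
      calc ‖mapF p a - mapF p (a - b) - mapF p b‖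
          ≤ (p - 1) * (2 * A + B) ^ (p - 2) * B + B ^ (p - 1) := step1
        _ ≤ P * 3 ^ P * δ * A ^ (p - 1) + δ * A ^ (p - 1) := add_le_add t1 f2
        _ = K * δ * A ^ (p - 1) := by rw [hK]; ring
        _ ≤ K * δ * A ^ (p - 1) + K' * B ^ (p - 1) := le_add_of_nonneg_right hrest
    · have g1 : 2 * A + B ≤ (3 / δ) * B := by
        rw [div_mul_eq_mul_div, le_div_iff₀ hδpos]
        nlinarith
      have g2 : (2 * A + B) ^ (p - 2) ≤ (3 / δ) ^ P * B ^ (p - 2) := by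
        calc (2 * A + B) ^ (p - 2) ≤ ((3 / δ) * B) ^ (p - 2) := by
              apply Real.rpow_le_rpow (by positivity) g1 (by linarith)
          _ = (3 / δ) ^ (p - 2) * B ^ (p - 2) := Real.mul_rpow (by positivity) hB0
          _ ≤ (3 / δ) ^ P * B ^ (p - 2) := by
              apply mul_le_mul_of_nonneg_right _ (Real.rpow_nonneg hB0 _)
              exact Real.rpow_le_rpow_of_exponent_le h3δ (by linarith)
      have t1 : (p - 1) * (2 * A + B) ^ (p - 2) * B ≤ P * (3 / δ) ^ P * B ^ (p - 1) := by
        calc (p - 1) * (2 * A + B) ^ (p - 2) * B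
            ≤ P * ((3 / δ) ^ P * B ^ (p - 2)) * B := by
              apply mul_le_mul_of_nonneg_right _ hB0
              apply mul_le_mul (by linarith) g2 (Real.rpow_nonneg (by positivity) _)
                (by linarith)
          _ = P * (3 / δ) ^ P * (B ^ (p - 2) * B) := by ring
          _ = P * (3 / δ) ^ P * B ^ (p - 1) := by rw [hBpow]
      have hrest : 0 ≤ K * δ * A ^ (p - 1) :=
        mul_nonneg (mul_nonneg (by linarith) hδpos.le) (Real.rpow_nonneg hA0 _)
      calc ‖mapF p a - mapF p (a - b) - mapF p b‖
          ≤ (p - 1) * (2 * A + B) ^ (p - 2) * B + B ^ (p - 1) := step1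
        _ ≤ P * (3 / δ) ^ P * B ^ (p - 1) + B ^ (p - 1) := add_le_add t1 le_rfl
        _ = K' * B ^ (p - 1) := by rw [hK']; ring
        _ ≤ K * δ * A ^ (p - 1) + K' * B ^ (p - 1) := le_add_of_nonneg_left hrest
  -- raise to power q
  have hpq : (p - 1) * q = p := by
    rw [hq]; field_simp
  have hmul1 : (K * δ * A ^ (p - 1)) ^ q = (K * δ) ^ q * A ^ p := by
    rw [Real.mul_rpow (by positivity) (Real.rpow_nonneg hA0 _),
      ← Real.rpow_mul hA0, hpq]
  have hmul2 : (K' * B ^ (p - 1)) ^ q = K' ^ q * B ^ p := by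
    rw [Real.mul_rpow (by linarith) (Real.rpow_nonneg hB0 _),
      ← Real.rpow_mul hB0, hpq]
  have h2q4 : (2 : ℝ) ^ q ≤ 4 := by
    have h : (2 : ℝ) ^ q ≤ 2 ^ (2 : ℝ) :=
      Real.rpow_le_rpow_of_exponent_le one_le_two hq2
    rw [Real.rpow_two] at h
    norm_num at h
    exact h
  have cKδ : (2 : ℝ) ^ q * (K * δ) ^ q ≤ ε := by
    rw [hKδ]
    have h1 : (ε / 4) ^ q ≤ ε / 4 := by
      have h := Real.rpow_le_rpow_of_exponent_ge (x := ε / 4) (y := q) (z := 1)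
        (by positivity) (by linarith) hq1
      rwa [Real.rpow_one] at h
    calc (2 : ℝ) ^ q * (ε / 4) ^ q ≤ 4 * (ε / 4) :=
          mul_le_mul h2q4 h1 (Real.rpow_nonneg (by positivity) _) (by norm_num)
      _ = ε := by ring
  have cK' : (2 : ℝ) ^ q * K' ^ q ≤ 4 * K' ^ (2 : ℝ) := by
    have h1 : K' ^ q ≤ K' ^ (2 : ℝ) := Real.rpow_le_rpow_of_exponent_le hK'1 hq2
    exact mul_le_mul h2q4 h1 (Real.rpow_nonneg (by linarith) _) (by norm_num)
  have step3 : (K * δ * A ^ (p - 1) + K' * B ^ (p - 1)) ^ q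
      ≤ 2 ^ q * ((K * δ) ^ q * A ^ p + K' ^ q * B ^ p) := by
    have := add_rpow_le (K * δ * A ^ (p - 1)) (K' * B ^ (p - 1)) q
      (by positivity) (mul_nonneg (by linarith) (Real.rpow_nonneg hB0 _)) (by linarith)
    rwa [hmul1, hmul2] at this
  calc ‖mapF p a - mapF p (a - b) - mapF p b‖ ^ q
      ≤ (K * δ * A ^ (p - 1) + K' * B ^ (p - 1)) ^ q :=
        Real.rpow_le_rpow (norm_nonneg _) hT (by linarith)
    _ ≤ 2 ^ q * ((K * δ) ^ q * A ^ p + K' ^ q * B ^ p) := step3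
    _ = (2 ^ q * (K * δ) ^ q) * A ^ p + (2 ^ q * K' ^ q) * B ^ p := by ring
    _ ≤ ε * A ^ p + (4 * K' ^ (2 : ℝ)) * B ^ p :=
        add_le_add (mul_le_mul_of_nonneg_right cKδ (Real.rpow_nonneg hA0 _))
          (mul_le_mul_of_nonneg_right cK' (Real.rpow_nonneg hB0 _))

end Aux

/-- Brezis–Lieb lemma, third version, for variable exponents. -/
theorem brezis_lieb_third_version_region_two
    (N k : ℕ) (hN : 1 ≤ N) (hk : 1 ≤ k)
    (z : EuclideanSpace ℝ (Fin N) → ℝ) (hz : Measurable z)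
    (zm zp : ℝ) (hzm : 1 < zm)
    (hzbound : ∀ᵐ x : EuclideanSpace ℝ (Fin N), zm ≤ z x ∧ z x ≤ zp)
    (η : ℕ → EuclideanSpace ℝ (Fin N) → EuclideanSpace ℝ (Fin k))
    (ηlim : EuclideanSpace ℝ (Fin N) → EuclideanSpace ℝ (Fin k))
    (hηm : ∀ n, Measurable (η n)) (hηlimm : Measurable ηlim)
    (hconv : ∀ᵐ x : EuclideanSpace ℝ (Fin N),
      Tendsto (fun n => η n x) atTop (𝓝 (ηlim x)))
    (hint : ∀ n, Integrable (fun x => ‖η n x‖ ^ z x))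
    (hsup : ∃ C : ℝ, ∀ n, ∫ x, ‖η n x‖ ^ z x ≤ C) :
    Tendsto
      (fun n => ∫ x in {x : EuclideanSpace ℝ (Fin N) | 2 ≤ z x},
        ‖(‖η n x‖ ^ (z x - 2)) • η n x
          - (‖η n x - ηlim x‖ ^ (z x - 2)) • (η n x - ηlim x)
          - (‖ηlim x‖ ^ (z x - 2)) • ηlim x‖ ^ (z x / (z x - 1)))
      atTop (𝓝 0) := by
  classical
  set S : Set (EuclideanSpace ℝ (Fin N)) := {x | 2 ≤ z x} with hSdef
  have hSm : MeasurableSet S := measurableSet_le measurable_const hz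
  set P : ℝ := max zp 2 with hPdef
  have hP2 : (2 : ℝ) ≤ P := le_max_right _ _
  obtain ⟨C₀, hC₀⟩ := hsup
  have hzae : ∀ᵐ x : EuclideanSpace ℝ (Fin N), 1 ≤ z x ∧ z x ≤ P := by
    filter_upwards [hzbound] with x hx
    exact ⟨by linarith [hx.1], le_trans hx.2 (le_max_left _ _)⟩
  -- the limit function g
  set g : EuclideanSpace ℝ (Fin N) → ℝ := fun x => ‖ηlim x‖ ^ z x with hgdef
  have hgm : Measurable g := hηlimm.norm.pow hz
  have hg_nonneg : ∀ x, 0 ≤ g x := fun x => Real.rpow_nonneg (norm_nonneg _) _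
  have htend_g : ∀ᵐ x : EuclideanSpace ℝ (Fin N),
      Tendsto (fun n => ‖η n x‖ ^ z x) atTop (𝓝 (g x)) := by
    filter_upwards [hconv, hzae] with x hx hzx
    exact (hx.norm).rpow_const (Or.inr (by linarith [hzx.1]))
  -- integrability of g by Fatou
  have hnn : ∀ n, (0 : EuclideanSpace ℝ (Fin N) → ℝ) ≤ᵐ[volume] fun x => ‖η n x‖ ^ z x :=
    fun n => Filter.Eventually.of_forall fun x => Real.rpow_nonneg (norm_nonneg _) _
  have hlint : ∀ n, ∫⁻ x, ENNReal.ofReal (‖η n x‖ ^ z x) ≤ ENNReal.ofReal C₀ := by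
    intro n
    rw [← ofReal_integral_eq_lintegral_ofReal (hint n) (hnn n)]
    exact ENNReal.ofReal_le_ofReal (hC₀ n)
  have hgint : Integrable g := by
    have hliminf : ∀ᵐ x : EuclideanSpace ℝ (Fin N),
        ENNReal.ofReal (g x)
          = liminf (fun n => ENNReal.ofReal (‖η n x‖ ^ z x)) atTop := by
      filter_upwards [htend_g] with x hx
      exact ((ENNReal.continuous_ofReal.tendsto _).comp hx).liminf_eq.symm
    have hfatou : ∫⁻ x, ENNReal.ofReal (g x) ≤ ENNReal.ofReal C₀ := by
      calc ∫⁻ x, ENNReal.ofReal (g x)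
          = ∫⁻ x, liminf (fun n => ENNReal.ofReal (‖η n x‖ ^ z x)) atTop :=
            lintegral_congr_ae hliminf
        _ ≤ liminf (fun n => ∫⁻ x, ENNReal.ofReal (‖η n x‖ ^ z x)) atTop :=
            lintegral_liminf_le fun n => ((hηm n).norm.pow hz).ennreal_ofReal
        _ ≤ ENNReal.ofReal C₀ := by
            apply liminf_le_of_le
            · isBoundedDefault
            · intro b hb
              obtain ⟨n, hn⟩ := hb.exists
              exact le_trans hn (hlint n)
    refine ⟨hgm.aestronglyMeasurable, ?_⟩
    rw [hasFiniteIntegral_iff_norm]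
    have heq : ∀ x, ENNReal.ofReal ‖g x‖ = ENNReal.ofReal (g x) := fun x => by
      rw [Real.norm_of_nonneg (hg_nonneg x)]
    simp only [heq]
    exact lt_of_le_of_lt hfatou ENNReal.ofReal_lt_top
  -- the difference functions
  set t : ℕ → EuclideanSpace ℝ (Fin N) → ℝ := fun n x => ‖η n x - ηlim x‖ ^ z x with htdef
  have htm : ∀ n, Measurable (t n) := fun n => ((hηm n).sub hηlimm).norm.pow hz
  have ht_nonneg : ∀ n x, 0 ≤ t n x := fun n x => Real.rpow_nonneg (norm_nonneg _) _
  have hdom : ∀ n, ∀ᵐ x : EuclideanSpace ℝ (Fin N),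
      t n x ≤ 2 ^ P * (‖η n x‖ ^ z x + g x) := by
    intro n
    filter_upwards [hzae] with x hx
    have h0 : (0 : ℝ) ≤ z x := by linarith [hx.1]
    have h1 : ‖η n x - ηlim x‖ ≤ 2 * max ‖η n x‖ ‖ηlim x‖ := by
      have := norm_sub_le (η n x) (ηlim x)
      rcases le_total ‖η n x‖ ‖ηlim x‖ with h | h
      · rw [max_eq_right h]; linarith
      · rw [max_eq_left h]; linarith
    calc t n x ≤ (2 * max ‖η n x‖ ‖ηlim x‖) ^ z x :=
          Real.rpow_le_rpow (norm_nonneg _) h1 h0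
      _ = 2 ^ z x * (max ‖η n x‖ ‖ηlim x‖) ^ z x :=
          Real.mul_rpow (by norm_num) (le_max_of_le_left (norm_nonneg _))
      _ ≤ 2 ^ P * (‖η n x‖ ^ z x + g x) := by
          apply mul_le_mul
          · exact Real.rpow_le_rpow_of_exponent_le one_le_two hx.2
          · rcases max_cases ‖η n x‖ ‖ηlim x‖ with ⟨h, _⟩ | ⟨h, _⟩ <;> rw [h]
            · exact le_add_of_nonneg_right (hg_nonneg x)
            · exact le_add_of_nonneg_left (Real.rpow_nonneg (norm_nonneg _) _)
          · exact Real.rpow_nonneg (le_max_of_le_left (norm_nonneg _)) _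
          · exact Real.rpow_nonneg (by norm_num) _
  have hbound_int : ∀ n, Integrable
      (fun x => 2 ^ P * (‖η n x‖ ^ z x + g x)) :=
    fun n => ((hint n).add hgint).const_mul _
  have htint : ∀ n, Integrable (t n) := by
    intro n
    apply Integrable.mono' (hbound_int n) (htm n).aestronglyMeasurable
    filter_upwards [hdom n] with x hx
    rwa [Real.norm_of_nonneg (ht_nonneg n x)]
  set M : ℝ := 2 ^ P * (C₀ + ∫ x, g x) with hMdef
  have htM : ∀ n, ∫ x, t n x ≤ M := by
    intro n
    calc ∫ x, t n x ≤ ∫ x, 2 ^ P * (‖η n x‖ ^ z x + g x) :=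
          integral_mono_ae (htint n) (hbound_int n) (hdom n)
      _ = 2 ^ P * ((∫ x, ‖η n x‖ ^ z x) + ∫ x, g x) := by
          rw [integral_const_mul, integral_add (hint n) hgint]
      _ ≤ M := by
          rw [hMdef]
          apply mul_le_mul_of_nonneg_left _ (Real.rpow_nonneg (by norm_num) _)
          have := hC₀ n
          linarith
  have hM0 : 0 ≤ M :=
    le_trans (integral_nonneg (ht_nonneg 0)) (htM 0)
  -- the main integrand
  set F : ℕ → EuclideanSpace ℝ (Fin N) → ℝ := fun n x =>
    ‖mapF (z x) (η n x) - mapF (z x) (η n x - ηlim x) - mapF (z x) (ηlim x)‖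
      ^ (z x / (z x - 1)) with hFdef
  have hFm : ∀ n, Measurable (F n) := by
    intro n
    apply Measurable.pow _ (hz.div (hz.sub measurable_const))
    apply Measurable.norm
    have m1 : Measurable (fun x => mapF (z x) (η n x)) :=
      ((hηm n).norm.pow (hz.sub measurable_const)).smul (hηm n)
    have m2 : Measurable (fun x => mapF (z x) (η n x - ηlim x)) :=
      (((hηm n).sub hηlimm).norm.pow (hz.sub measurable_const)).smul ((hηm n).sub hηlimm)
    have m3 : Measurable (fun x => mapF (z x) (ηlim x)) :=
      (hηlimm.norm.pow (hz.sub measurable_const)).smul hηlimm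
    exact (m1.sub m2).sub m3
  have hF_nonneg : ∀ n x, 0 ≤ F n x := fun n x => Real.rpow_nonneg (norm_nonneg _) _
  -- a.e. pointwise convergence of F on S
  have hFconv : ∀ᵐ x ∂(volume.restrict S), Tendsto (fun n => F n x) atTop (𝓝 0) := by
    filter_upwards [ae_restrict_of_ae hconv, ae_restrict_of_ae hzae,
      ae_restrict_mem hSm] with x hx hzx hxS
    have hp2 : (2 : ℝ) ≤ z x := hxS
    have hcont := mapF_cont (E := EuclideanSpace ℝ (Fin k)) (z x) hp2
    have h1 : Tendsto (fun n => mapF (z x) (η n x)) atTop (𝓝 (mapF (z x) (ηlim x))) :=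
      (hcont.tendsto (ηlim x)).comp hx
    have h2 : Tendsto (fun n => mapF (z x) (η n x - ηlim x)) atTop
        (𝓝 (mapF (z x) (0 : EuclideanSpace ℝ (Fin k)))) := by
      apply (hcont.tendsto 0).comp
      simpa using hx.sub (tendsto_const_nhds (x := ηlim x))
    have h3 : Tendsto (fun n => mapF (z x) (η n x) - mapF (z x) (η n x - ηlim x)
        - mapF (z x) (ηlim x)) atTop
        (𝓝 (mapF (z x) (ηlim x) - mapF (z x) 0 - mapF (z x) (ηlim x))) :=
      (h1.sub h2).sub tendsto_const_nhds
    rw [mapF_zero, sub_zero, sub_self] at h3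
    have hq0 : 0 ≤ z x / (z x - 1) := div_nonneg (by linarith) (by linarith)
    have h4 := (h3.norm).rpow_const (Or.inr hq0)
    rw [norm_zero, Real.zero_rpow] at h4
    · exact h4
    · apply div_ne_zero <;> [linarith; linarith]
  -- conclude via epsilon argument
  rw [show (fun n => ∫ x in {x : EuclideanSpace ℝ (Fin N) | 2 ≤ z x},
        ‖(‖η n x‖ ^ (z x - 2)) • η n x
          - (‖η n x - ηlim x‖ ^ (z x - 2)) • (η n x - ηlim x)
          - (‖ηlim x‖ ^ (z x - 2)) • ηlim x‖ ^ (z x / (z x - 1)))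
      = fun n => ∫ x in S, F n x from rfl]
  rw [tendsto_order]
  constructor
  · intro c hc
    apply Filter.Eventually.of_forall
    intro n
    exact lt_of_lt_of_le hc (integral_nonneg (fun x => hF_nonneg n x))
  · intro ε' hε'
    set ε : ℝ := min 1 (ε' / (2 * (M + 1))) with hεdef
    have hεpos : 0 < ε := lt_min one_pos (by positivity)
    have hε1 : ε ≤ 1 := min_le_left _ _
    obtain ⟨C, hC0, hCkey⟩ := mapF_eps (E := EuclideanSpace ℝ (Fin k)) P hP2 hεpos hε1
    -- key a.e. bound on S
    have hkey : ∀ n, ∀ᵐ x ∂(volume.restrict S), F n x ≤ ε * t n x + C * g x := by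
      intro n
      filter_upwards [ae_restrict_of_ae hzae, ae_restrict_mem hSm] with x hzx hxS
      exact hCkey (z x) hxS hzx.2 (η n x) (ηlim x)
    set G : ℕ → EuclideanSpace ℝ (Fin N) → ℝ :=
      fun n x => max (F n x - ε * t n x) 0 with hGdef
    have hGm : ∀ n, Measurable (G n) :=
      fun n => ((hFm n).sub ((htm n).const_mul ε)).max measurable_const
    have hGbound : ∀ n, ∀ᵐ x ∂(volume.restrict S), ‖G n x‖ ≤ C * g x := by
      intro n
      filter_upwards [hkey n] with x hx
      rw [Real.norm_of_nonneg (le_max_right _ _)]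
      apply max_le
      · have := ht_nonneg n x
        nlinarith [mul_nonneg hεpos.le (ht_nonneg n x)]
      · exact mul_nonneg hC0 (hg_nonneg x)
    have hGconv : ∀ᵐ x ∂(volume.restrict S), Tendsto (fun n => G n x) atTop (𝓝 0) := by
      filter_upwards [hFconv, ae_restrict_of_ae hconv, ae_restrict_of_ae hzae]
        with x hF0 hx hzx
      have htt : Tendsto (fun n => t n x) atTop (𝓝 0) := by
        have h1 : Tendsto (fun n => ‖η n x - ηlim x‖) atTop (𝓝 0) := by
          simpa using (hx.sub (tendsto_const_nhds (x := ηlim x))).norm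
        have h2 := h1.rpow_const (p := z x) (Or.inr (by linarith [hzx.1]))
        rwa [Real.zero_rpow (by linarith [hzx.1] : z x ≠ 0)] at h2
      have h3 : Tendsto (fun n => F n x - ε * t n x) atTop (𝓝 (0 - ε * 0)) :=
        hF0.sub (htt.const_mul ε)
      have h4 := h3.max (tendsto_const_nhds (x := (0:ℝ)))
      norm_num at h4
      exact h4
    have hGint0 : Tendsto (fun n => ∫ x in S, G n x) atTop (𝓝 0) := by
      have h := tendsto_integral_of_dominated_convergence (μ := volume.restrict S)
        (F := G) (f := fun _ => 0) (fun x => C * g x)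
        (fun n => (hGm n).aestronglyMeasurable)
        ((hgint.const_mul C).restrict)
        hGbound hGconv
      simpa using h
    have hFint : ∀ n, Integrable (F n) (volume.restrict S) := by
      intro n
      apply Integrable.mono'
        ((((htint n).const_mul ε).restrict (s := S)).add ((hgint.const_mul C).restrict))
        (hFm n).aestronglyMeasurable
      filter_upwards [hkey n] with x hx
      rwa [Real.norm_of_nonneg (hF_nonneg n x)]
    have hGint : ∀ n, Integrable (G n) (volume.restrict S) := by
      intro n
      apply Integrable.mono' ((hgint.const_mul C).restrict) (hGm n).aestronglyMeasurable
      exact hGbound n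
    have hmain : ∀ n, ∫ x in S, F n x ≤ (∫ x in S, G n x) + ε * M := by
      intro n
      have h1 : ∫ x in S, F n x ≤ ∫ x in S, (G n x + ε * t n x) := by
        apply integral_mono_ae (hFint n)
          ((hGint n).add (((htint n).restrict (s := S)).const_mul ε))
        apply Filter.Eventually.of_forall
        intro x
        simp only [Pi.add_apply, hGdef]
        have h := le_max_left (F n x - ε * t n x) 0
        linarith
      have h2 : ∫ x in S, (G n x + ε * t n x)
          = (∫ x in S, G n x) + ε * ∫ x in S, t n x := by
        rw [integral_add (hGint n) (((htint n).restrict (s := S)).const_mul ε),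
          integral_const_mul]
      have h3 : ∫ x in S, t n x ≤ M :=
        le_trans (setIntegral_le_integral (htint n)
          (Filter.Eventually.of_forall (ht_nonneg n))) (htM n)
      have h4 : ε * ∫ x in S, t n x ≤ ε * M := mul_le_mul_of_nonneg_left h3 hεpos.le
      rw [h2] at h1
      linarith
    have hεM : ε * M ≤ ε' / 2 := by
      have hεle : ε ≤ ε' / (2 * (M + 1)) := min_le_right _ _
      calc ε * M ≤ (ε' / (2 * (M + 1))) * (M + 1) := by
            apply mul_le_mul hεle (by linarith) hM0 (by positivity)
        _ = ε' / 2 := by field_simp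
    have hev : ∀ᶠ n in atTop, (∫ x in S, G n x) < ε' / 2 := by
      have := hGint0.eventually (eventually_lt_nhds (show (0:ℝ) < ε'/2 by positivity))
      exact this
    filter_upwards [hev] with n hn
    calc ∫ x in S, F n x ≤ (∫ x in S, G n x) + ε * M := hmain n
      _ < ε' / 2 + ε' / 2 := by linarith [hεM]
      _ = ε' := by ring
end

section
/- Let k ≥ 1 be an integer. There exists a constant C > 0 (depending only on k) such that for every real exponent z with 1 < z < 2 and all vectors y, h ∈ ℝ^k, one has | |y+h|^{z−2}(y+h) − |y|^{z−2} y | ≤ C |h|^{z−1}. Equivalently, the quantity α = sup over z ∈ (1,2), y ∈ ℝ^k, h ∈ ℝ^k \ {0} of | |y+h|^{z−2}(y+h) − |y|^{z−2} y | / |h|^{z−1} is finite. -/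
open Real

variable {E : Type*} [NormedAddCommGroup E] [InnerProductSpace ℝ E]

lemma pow_inner_eq (q : ℝ) (y : E) :
    (inner ℝ y y : ℝ) ^ (q / 2) = ‖y‖ ^ q := by
  rw [real_inner_self_eq_norm_sq, ← Real.rpow_natCast ‖y‖ 2, ← Real.rpow_mul (norm_nonneg y)]
  congr 1; push_cast; ring

lemma exists_deriv (q : ℝ) (hq : |q| ≤ 1) {x : E} (hx : x ≠ 0) :
    ∃ L : E →L[ℝ] E, HasFDerivAt (fun y : E => (‖y‖ ^ q) • y) L x ∧ ‖L‖ ≤ 2 * ‖x‖ ^ q := by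
  have hxn : (0:ℝ) < ‖x‖ := norm_pos_iff.mpr hx
  have hinner0 : (inner ℝ x x : ℝ) ≠ 0 := inner_self_ne_zero.mpr hx
  have hG : HasFDerivAt (fun y : E => (inner ℝ y y : ℝ))
      ((fderivInnerCLM ℝ (x, x)).comp ((ContinuousLinearMap.id ℝ E).prod
        (ContinuousLinearMap.id ℝ E))) x :=
    (hasFDerivAt_id x).inner ℝ (hasFDerivAt_id x)
  have hs := hG.rpow_const (p := q / 2) (Or.inl hinner0)
  have hF := hs.smul (hasFDerivAt_id x)
  set L := ((inner ℝ x x : ℝ) ^ (q / 2)) • ContinuousLinearMap.id ℝ E +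
      ((q / 2 * (inner ℝ x x : ℝ) ^ (q / 2 - 1)) •
        ((fderivInnerCLM ℝ (x, x)).comp ((ContinuousLinearMap.id ℝ E).prod
          (ContinuousLinearMap.id ℝ E)))).smulRight x with hL
  refine ⟨L, ?_, ?_⟩
  · have : (fun y : E => ((inner ℝ y y : ℝ) ^ (q / 2)) • y) = fun y : E => (‖y‖ ^ q) • y := by
      funext y; rw [pow_inner_eq]
    rw [← this]
    exact hF
  · apply ContinuousLinearMap.opNorm_le_bound _ (by positivity)
    intro v
    have hLv : L v = ((inner ℝ x x : ℝ) ^ (q / 2)) • v +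
        (q / 2 * (inner ℝ x x : ℝ) ^ (q / 2 - 1) * ((inner ℝ x v : ℝ) + (inner ℝ v x : ℝ))) • x := by
      simp [hL, fderivInnerCLM_apply]
    have h1 : (inner ℝ x x : ℝ) ^ (q / 2) = ‖x‖ ^ q := pow_inner_eq q x
    have h2 : (inner ℝ x x : ℝ) ^ (q / 2 - 1) = ‖x‖ ^ (q - 2) := by
      rw [real_inner_self_eq_norm_sq, ← Real.rpow_natCast ‖x‖ 2, ← Real.rpow_mul (norm_nonneg x)]
      congr 1; ring
    have hiv : |(inner ℝ x v : ℝ)| ≤ ‖x‖ * ‖v‖ := abs_real_inner_le_norm x v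
    have hvi : |(inner ℝ v x : ℝ)| ≤ ‖x‖ * ‖v‖ := by rw [real_inner_comm]; exact hiv
    have hqpos : (0:ℝ) ≤ ‖x‖ ^ q := Real.rpow_nonneg (norm_nonneg x) q
    have hq2pos : (0:ℝ) ≤ ‖x‖ ^ (q - 2) := Real.rpow_nonneg (norm_nonneg x) _
    have e1 : ‖((inner ℝ x x : ℝ) ^ (q / 2)) • v‖ = ‖x‖ ^ q * ‖v‖ := by
      rw [norm_smul, h1, Real.norm_eq_abs, abs_of_nonneg hqpos]
    have e2 : ‖(q / 2 * (inner ℝ x x : ℝ) ^ (q / 2 - 1) *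
        ((inner ℝ x v : ℝ) + (inner ℝ v x : ℝ))) • x‖ ≤ |q| * ‖x‖ ^ q * ‖v‖ := by
      rw [norm_smul, Real.norm_eq_abs]
      have habs : |q / 2 * (inner ℝ x x : ℝ) ^ (q / 2 - 1) * ((inner ℝ x v : ℝ) + (inner ℝ v x : ℝ))|
          ≤ |q| / 2 * ‖x‖ ^ (q - 2) * (2 * (‖x‖ * ‖v‖)) := by
        rw [abs_mul, abs_mul, h2, abs_of_nonneg hq2pos, abs_div]
        gcongr
        · norm_num
        · calc |(inner ℝ x v : ℝ) + (inner ℝ v x : ℝ)| ≤ |(inner ℝ x v : ℝ)| + |(inner ℝ v x : ℝ)| :=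
              abs_add_le _ _
          _ ≤ 2 * (‖x‖ * ‖v‖) := by linarith
      calc _ ≤ (|q| / 2 * ‖x‖ ^ (q - 2) * (2 * (‖x‖ * ‖v‖))) * ‖x‖ := by
              gcongr
        _ = |q| * (‖x‖ ^ (q - 2) * ‖x‖ * ‖x‖) * ‖v‖ := by ring
        _ = |q| * ‖x‖ ^ q * ‖v‖ := by
              rw [← Real.rpow_add_one hxn.ne' (q - 2), ← Real.rpow_add_one hxn.ne']
              rw [show q - 2 + 1 + 1 = q from by ring]
    have hA : (0:ℝ) ≤ ‖x‖ ^ q * ‖v‖ := mul_nonneg hqpos (norm_nonneg v)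
    have hfin : |q| * (‖x‖ ^ q * ‖v‖) ≤ 1 * (‖x‖ ^ q * ‖v‖) :=
      mul_le_mul_of_nonneg_right hq hA
    calc ‖L v‖ ≤ ‖((inner ℝ x x : ℝ) ^ (q / 2)) • v‖ +
        ‖(q / 2 * (inner ℝ x x : ℝ) ^ (q / 2 - 1) * ((inner ℝ x v : ℝ) + (inner ℝ v x : ℝ))) • x‖ := by
          rw [hLv]; exact norm_add_le _ _
      _ ≤ ‖x‖ ^ q * ‖v‖ + |q| * ‖x‖ ^ q * ‖v‖ := by rw [e1]; exact add_le_add le_rfl e2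
      _ ≤ 2 * ‖x‖ ^ q * ‖v‖ := by nlinarith

lemma normF_eq (z : ℝ) (hz : z ≠ 1) (x : E) :
    ‖(‖x‖ ^ (z - 2)) • x‖ = ‖x‖ ^ (z - 1) := by
  rcases eq_or_ne x 0 with rfl | hx
  · simp [Real.zero_rpow (sub_ne_zero.mpr hz)]
  · have hxn : (0:ℝ) < ‖x‖ := norm_pos_iff.mpr hx
    rw [norm_smul, Real.norm_eq_abs, abs_of_nonneg (Real.rpow_nonneg (norm_nonneg x) _),
      ← Real.rpow_add_one hxn.ne' (z - 2), show z - 2 + 1 = z - 1 from by ring]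


/-- Uniform bound: for exponents `z ∈ (1,2)`, the map `y ↦ |y|^{z-2} y` is
`(z-1)`-Hölder with a constant depending only on `k`. -/
theorem sup_F_finite (k : ℕ) (hk : 1 ≤ k) :
    ∃ C : ℝ, 0 < C ∧ ∀ z : ℝ, 1 < z → z < 2 →
      ∀ y h : EuclideanSpace ℝ (Fin k),
        ‖(‖y + h‖ ^ (z - 2)) • (y + h) - (‖y‖ ^ (z - 2)) • y‖ ≤ C * ‖h‖ ^ (z - 1) := by
  refine ⟨5, by norm_num, fun z hz1 hz2 y h => ?_⟩
  have hz1' : z ≠ 1 := hz1.ne'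
  have hzm1 : (0:ℝ) < z - 1 := by linarith
  rcases eq_or_ne h 0 with rfl | hh
  · simp [Real.zero_rpow hzm1.ne']
  have hhn : (0:ℝ) < ‖h‖ := norm_pos_iff.mpr hh
  have hrp : (0:ℝ) ≤ ‖h‖ ^ (z - 1) := Real.rpow_nonneg (norm_nonneg h) _
  rcases le_or_gt ‖y‖ (2 * ‖h‖) with hcase | hcase
  · -- small y case
    have b1 : ‖(‖y + h‖ ^ (z - 2)) • (y + h)‖ ≤ 3 * ‖h‖ ^ (z - 1) := by
      rw [normF_eq z hz1']
      calc ‖y + h‖ ^ (z - 1) ≤ (3 * ‖h‖) ^ (z - 1) := by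
            apply Real.rpow_le_rpow (norm_nonneg _) _ hzm1.le
            calc ‖y + h‖ ≤ ‖y‖ + ‖h‖ := norm_add_le _ _
              _ ≤ 3 * ‖h‖ := by linarith
        _ = 3 ^ (z - 1) * ‖h‖ ^ (z - 1) := Real.mul_rpow (by norm_num) (norm_nonneg h)
        _ ≤ 3 * ‖h‖ ^ (z - 1) := by
            have h3 : (3:ℝ) ^ (z - 1) ≤ 3 := by
              calc (3:ℝ) ^ (z - 1) ≤ 3 ^ (1:ℝ) :=
                    Real.rpow_le_rpow_of_exponent_le (by norm_num) (by linarith)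
                _ = 3 := Real.rpow_one 3
            exact mul_le_mul_of_nonneg_right h3 hrp
    have b2 : ‖(‖y‖ ^ (z - 2)) • y‖ ≤ 2 * ‖h‖ ^ (z - 1) := by
      rw [normF_eq z hz1']
      calc ‖y‖ ^ (z - 1) ≤ (2 * ‖h‖) ^ (z - 1) :=
            Real.rpow_le_rpow (norm_nonneg _) hcase hzm1.le
        _ = 2 ^ (z - 1) * ‖h‖ ^ (z - 1) := Real.mul_rpow (by norm_num) (norm_nonneg h)
        _ ≤ 2 * ‖h‖ ^ (z - 1) := by
            have h2 : (2:ℝ) ^ (z - 1) ≤ 2 := by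
              calc (2:ℝ) ^ (z - 1) ≤ 2 ^ (1:ℝ) :=
                    Real.rpow_le_rpow_of_exponent_le (by norm_num) (by linarith)
                _ = 2 := Real.rpow_one 2
            exact mul_le_mul_of_nonneg_right h2 hrp
    calc ‖(‖y + h‖ ^ (z - 2)) • (y + h) - (‖y‖ ^ (z - 2)) • y‖
        ≤ ‖(‖y + h‖ ^ (z - 2)) • (y + h)‖ + ‖(‖y‖ ^ (z - 2)) • y‖ := norm_sub_le _ _
      _ ≤ 5 * ‖h‖ ^ (z - 1) := by linarith
  · -- large y case: mean value
    set F : EuclideanSpace ℝ (Fin k) → EuclideanSpace ℝ (Fin k) :=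
      fun w => (‖w‖ ^ (z - 2)) • w with hFdef
    have hseg : ∀ x ∈ segment ℝ y (y + h), ‖h‖ ≤ ‖x‖ := by
      rintro x ⟨a, b, ha, hb, hab, rfl⟩
      have hx : a • y + b • (y + h) = y + b • h := by
        rw [smul_add, show a • y + (b • y + b • h) = (a + b) • y + b • h from by
          rw [add_smul]; abel, hab, one_smul]
      rw [hx]
      have h1 : ‖y‖ ≤ ‖y + b • h‖ + ‖b • h‖ := by
        have := norm_sub_le (y + b • h) (b • h)
        rwa [add_sub_cancel_right] at this
      have hb1 : b ≤ 1 := by linarith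
      have h2 : ‖b • h‖ ≤ ‖h‖ := by
        rw [norm_smul, Real.norm_eq_abs, abs_of_nonneg hb]
        nlinarith
      linarith
    have hq : |z - 2| ≤ 1 := by rw [abs_le]; constructor <;> linarith
    have hmvt : ∀ x ∈ segment ℝ y (y + h),
        HasFDerivWithinAt F (fderiv ℝ F x) (segment ℝ y (y + h)) x ∧
        ‖fderiv ℝ F x‖ ≤ 2 * ‖h‖ ^ (z - 2) := by
      intro x hx
      have hxne : x ≠ 0 := by
        intro h0
        have := hseg x hx
        rw [h0, norm_zero] at this
        linarith
      obtain ⟨L, hL, hLn⟩ := exists_deriv (z - 2) hq hxne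
      have hfd : fderiv ℝ F x = L := hL.fderiv
      refine ⟨by rw [hfd]; exact hL.hasFDerivWithinAt, ?_⟩
      rw [hfd]
      refine hLn.trans ?_
      have : ‖x‖ ^ (z - 2) ≤ ‖h‖ ^ (z - 2) :=
        Real.rpow_le_rpow_of_nonpos hhn (hseg x hx) (by linarith)
      linarith
    have key := (convex_segment y (y + h)).norm_image_sub_le_of_norm_hasFDerivWithin_le
      (fun x hx => (hmvt x hx).1) (fun x hx => (hmvt x hx).2)
      (left_mem_segment ℝ y (y + h)) (right_mem_segment ℝ y (y + h))
    have hstep : ‖F (y + h) - F y‖ ≤ 2 * ‖h‖ ^ (z - 2) * ‖h‖ := by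
      have : y + h - y = h := by abel
      rwa [this] at key
    calc ‖(‖y + h‖ ^ (z - 2)) • (y + h) - (‖y‖ ^ (z - 2)) • y‖
        = ‖F (y + h) - F y‖ := rfl
      _ ≤ 2 * ‖h‖ ^ (z - 2) * ‖h‖ := hstep
      _ = 2 * ‖h‖ ^ (z - 1) := by
          rw [mul_assoc, ← Real.rpow_add_one hhn.ne' (z - 2),
            show z - 2 + 1 = z - 1 from by ring]
      _ ≤ 5 * ‖h‖ ^ (z - 1) := by linarith
end

section
/- Let k ≥ 1 be an integer and let z be a real exponent with 1 < z < 2. For all vectors y, h ∈ ℝ^k with |y| > 2 and |h| = 1, and for each coordinate index i ∈ {1, …, k}, one has | |y+h|^{z−2}(y_i + h_i) − |y|^{z−2} y_i | ≤ (3 − z) ∫_0^1 |y + t h|^{z−2} dt < 2. -/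
open MeasureTheory Set

lemma coord_abs_le_norm {k : ℕ} (x : EuclideanSpace ℝ (Fin k)) (i : Fin k) :
    |x i| ≤ ‖x‖ := by
  have h := abs_real_inner_le_norm (EuclideanSpace.single i (1:ℝ)) x
  simpa [EuclideanSpace.inner_single_left, EuclideanSpace.norm_single] using h

/-- For `1 < z < 2`, `|y| > 2`, `|h| = 1` and each coordinate `i`, one has
`| |y+h|^{z-2}(yᵢ+hᵢ) − |y|^{z-2} yᵢ | ≤ (3-z) ∫₀¹ |y+th|^{z-2} dt < 2`. -/
theorem bound_large_y_coord (k : ℕ) (hk : 1 ≤ k) (z : ℝ) (hz1 : 1 < z) (hz2 : z < 2)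
    (y h : EuclideanSpace ℝ (Fin k)) (hy : 2 < ‖y‖) (hh : ‖h‖ = 1) (i : Fin k) :
    |‖y + h‖ ^ (z - 2) * (y i + h i) - ‖y‖ ^ (z - 2) * y i| ≤
        (3 - z) * ∫ t in (0:ℝ)..1, ‖y + t • h‖ ^ (z - 2) ∧
      (3 - z) * (∫ t in (0:ℝ)..1, ‖y + t • h‖ ^ (z - 2)) < 2 := by
  have hzlt : z - 2 < 0 := by linarith
  set q : ℝ := (z - 2) / 2 with hqdef
  have hqneg : q < 0 := by rw [hqdef]; linarith
  set n : ℝ → EuclideanSpace ℝ (Fin k) := fun t => y + t • h with hndef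
  set Q : ℝ → ℝ := fun t => ‖n t‖ ^ 2 with hQdef
  set c : ℝ → ℝ := fun t => y i + t * h i with hcdef
  -- lower bound on the norm
  have hNlb : ∀ t ∈ Icc (0:ℝ) 1, 1 < ‖n t‖ := by
    intro t ht
    have h1 : ‖y‖ ≤ ‖n t‖ + ‖t • h‖ := by
      calc ‖y‖ = ‖(y + t • h) - t • h‖ := by congr 1; abel
      _ ≤ ‖y + t • h‖ + ‖t • h‖ := norm_sub_le _ _
    have h2 : ‖t • h‖ ≤ 1 := by
      rw [norm_smul, hh, mul_one, Real.norm_eq_abs, abs_of_nonneg ht.1]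
      exact ht.2
    have : n t = y + t • h := rfl
    linarith [h1, h2]
  have hQpos : ∀ t ∈ Icc (0:ℝ) 1, 0 < Q t := by
    intro t ht
    have := hNlb t ht
    have : (0:ℝ) < ‖n t‖ := by linarith
    exact pow_pos this 2
  have hQq : ∀ t, Q t ^ q = ‖n t‖ ^ (z - 2) := by
    intro t
    have : Q t = ‖n t‖ ^ (2:ℕ) := rfl
    rw [this, ← Real.rpow_natCast ‖n t‖ 2, ← Real.rpow_mul (norm_nonneg _)]
    congr 1
    push_cast
    rw [hqdef]; ring
  -- derivatives
  have hnD : ∀ t : ℝ, HasDerivAt n h t := by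
    intro t
    have := ((hasDerivAt_id t).smul_const h).const_add y; rw [one_smul] at this; exact this
  have hQD : ∀ t : ℝ, HasDerivAt Q (2 * (inner ℝ (n t) h : ℝ)) t := fun t => (hnD t).norm_sq
  set g : ℝ → ℝ := fun t => Q t ^ q * c t with hgdef
  set g' : ℝ → ℝ :=
    fun t => 2 * (inner ℝ (n t) h : ℝ) * q * Q t ^ (q - 1) * c t + Q t ^ q * h i with hg'def
  have hgD : ∀ t ∈ Icc (0:ℝ) 1, HasDerivAt g (g' t) t := by
    intro t ht
    have h1 : HasDerivAt (fun t => Q t ^ q) (2 * (inner ℝ (n t) h : ℝ) * q * Q t ^ (q - 1)) t :=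
      (hQD t).rpow_const (Or.inl (hQpos t ht).ne')
    have h2 : HasDerivAt c (h i) t := by
      simpa [hcdef] using ((hasDerivAt_id t).mul_const (h i)).const_add (y i)
    exact h1.mul h2
  -- pointwise bound on the derivative
  have hbound : ∀ t ∈ Icc (0:ℝ) 1, |g' t| ≤ (3 - z) * ‖n t‖ ^ (z - 2) := by
    intro t ht
    have hN : 1 < ‖n t‖ := hNlb t ht
    have hct : c t = n t i := by
      simp [hcdef, hndef, PiLp.add_apply, PiLp.smul_apply, smul_eq_mul]
    have hc_le : |c t| ≤ ‖n t‖ := by rw [hct]; exact coord_abs_le_norm _ i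
    have hinner : |(inner ℝ (n t) h : ℝ)| ≤ ‖n t‖ := by
      have := abs_real_inner_le_norm (n t) h
      rwa [hh, mul_one] at this
    have hhi : |h i| ≤ 1 := by have := coord_abs_le_norm h i; rwa [hh] at this
    have hQq_t : Q t ^ q = ‖n t‖ ^ (z - 2) := hQq t
    have hQq1 : Q t ^ (q - 1) * Q t = Q t ^ q := by
      rw [← Real.rpow_add_one (hQpos t ht).ne']
      ring_nf
    have hQqpos : 0 < Q t ^ q := Real.rpow_pos_of_pos (hQpos t ht) q
    have hQp1pos : 0 ≤ Q t ^ (q - 1) := (Real.rpow_pos_of_pos (hQpos t ht) _).le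
    have habsq : |q| = (2 - z) / 2 := by
      rw [abs_of_neg hqneg, hqdef]; ring
    have habs : |g' t| ≤
        2 * |(inner ℝ (n t) h : ℝ)| * |q| * Q t ^ (q - 1) * |c t| + Q t ^ q * |h i| := by
      refine (abs_add_le _ _).trans ?_
      rw [abs_mul, abs_mul, abs_mul, abs_mul, abs_mul]
      rw [abs_of_nonneg hQp1pos, abs_of_nonneg hQqpos.le]
      norm_num
    have key1 : 2 * |(inner ℝ (n t) h : ℝ)| * |q| * Q t ^ (q - 1) * |c t|
        ≤ (2 - z) * Q t ^ q := by
      calc 2 * |(inner ℝ (n t) h : ℝ)| * |q| * Q t ^ (q - 1) * |c t|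
          ≤ 2 * ‖n t‖ * |q| * Q t ^ (q - 1) * ‖n t‖ := by
            gcongr
        _ = (2 - z) * (Q t ^ (q - 1) * (‖n t‖ ^ 2)) := by rw [habsq]; ring
        _ = (2 - z) * (Q t ^ (q - 1) * Q t) := rfl
        _ = (2 - z) * Q t ^ q := by rw [hQq1]
    have key2 : Q t ^ q * |h i| ≤ Q t ^ q := by
      nlinarith [hQqpos.le, hhi, abs_nonneg (h i)]
    calc |g' t| ≤ (2 - z) * Q t ^ q + Q t ^ q := by linarith
      _ = (3 - z) * Q t ^ q := by ring
      _ = (3 - z) * ‖n t‖ ^ (z - 2) := by rw [hQq_t]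
  -- continuity / integrability
  have huIcc : uIcc (0:ℝ) 1 = Icc 0 1 := uIcc_of_le zero_le_one
  have hncont : Continuous n := by
    rw [hndef]; exact continuous_const.add (continuous_id.smul continuous_const)
  have hQcont : Continuous Q := by rw [hQdef]; exact (hncont.norm).pow 2
  have hinnercont : Continuous (fun t => (inner ℝ (n t) h : ℝ)) :=
    hncont.inner continuous_const
  have hccont : Continuous c := by
    rw [hcdef]; exact continuous_const.add (continuous_id.mul continuous_const)
  have hfcont : ContinuousOn (fun t => ‖n t‖ ^ (z - 2)) (Icc (0:ℝ) 1) :=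
    (hncont.norm.continuousOn).rpow_const
      (fun t ht => Or.inl (by have := hNlb t ht; linarith))
  have hfint : IntervalIntegrable (fun t => ‖n t‖ ^ (z - 2)) volume 0 1 := by
    apply ContinuousOn.intervalIntegrable
    rw [huIcc]; exact hfcont
  have hg'int : IntervalIntegrable g' volume 0 1 := by
    apply ContinuousOn.intervalIntegrable
    rw [huIcc, hg'def]
    apply ContinuousOn.add
    · exact ((((continuous_const.mul hinnercont).mul continuous_const).continuousOn.mul
        (hQcont.continuousOn.rpow_const (fun t ht => Or.inl (hQpos t ht).ne'))).mul
        hccont.continuousOn)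
    · exact (hQcont.continuousOn.rpow_const
        (fun t ht => Or.inl (hQpos t ht).ne')).mul continuousOn_const
  have hbint : IntervalIntegrable (fun t => (3 - z) * ‖n t‖ ^ (z - 2)) volume 0 1 :=
    hfint.const_mul _
  -- FTC
  have hFTC : ∫ t in (0:ℝ)..1, g' t = g 1 - g 0 :=
    intervalIntegral.integral_eq_sub_of_hasDerivAt
      (fun t ht => hgD t (huIcc ▸ ht)) hg'int
  have hintnn : 0 ≤ ∫ t in (0:ℝ)..1, ‖n t‖ ^ (z - 2) :=
    intervalIntegral.integral_nonneg zero_le_one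
      (fun u _ => Real.rpow_nonneg (norm_nonneg _) _)
  have hmain : |g 1 - g 0| ≤ (3 - z) * ∫ t in (0:ℝ)..1, ‖n t‖ ^ (z - 2) := by
    rw [← hFTC]
    have hae : ∀ᵐ t ∂(volume.restrict (Set.uIoc (0:ℝ) 1)), ‖g' t‖ ≤ (3 - z) * ‖n t‖ ^ (z - 2) := by
      refine ae_restrict_of_forall_mem measurableSet_uIoc ?_
      intro t ht
      rw [uIoc_of_le zero_le_one] at ht
      rw [Real.norm_eq_abs]
      exact hbound t (Ioc_subset_Icc_self ht)
    have h1 := intervalIntegral.norm_integral_le_of_norm_le zero_le_one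
      ((ae_restrict_iff' measurableSet_Ioc).mp (by rwa [uIoc_of_le zero_le_one] at hae)) hbint
    rw [Real.norm_eq_abs] at h1
    have h2 : ∫ t in (0:ℝ)..1, (3 - z) * ‖n t‖ ^ (z - 2)
        = (3 - z) * ∫ t in (0:ℝ)..1, ‖n t‖ ^ (z - 2) :=
      intervalIntegral.integral_const_mul _ _
    have h3 : 0 ≤ (3 - z) * ∫ t in (0:ℝ)..1, ‖n t‖ ^ (z - 2) := by
      apply mul_nonneg (by linarith) hintnn
    rw [h2] at h1
    exact h1
  -- identify endpoints
  have hg1 : g 1 = ‖y + h‖ ^ (z - 2) * (y i + h i) := by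
    have hn1 : n 1 = y + h := by rw [hndef]; simp
    have hc1 : c 1 = y i + h i := by rw [hcdef]; simp
    rw [hgdef]
    simp only
    rw [hQq 1, hn1, hc1]
  have hg0 : g 0 = ‖y‖ ^ (z - 2) * y i := by
    have hn0 : n 0 = y := by rw [hndef]; simp
    have hc0 : c 0 = y i := by rw [hcdef]; simp
    rw [hgdef]
    simp only
    rw [hQq 0, hn0, hc0]
  have hintegrand : (∫ t in (0:ℝ)..1, ‖y + t • h‖ ^ (z - 2))
      = ∫ t in (0:ℝ)..1, ‖n t‖ ^ (z - 2) := by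
    rw [hndef]
  constructor
  · rw [hintegrand, ← hg1, ← hg0]
    exact hmain
  · rw [hintegrand]
    have hle1 : (∫ t in (0:ℝ)..1, ‖n t‖ ^ (z - 2)) ≤ 1 := by
      calc (∫ t in (0:ℝ)..1, ‖n t‖ ^ (z - 2)) ≤ ∫ _ in (0:ℝ)..1, (1:ℝ) := by
            apply intervalIntegral.integral_mono_on zero_le_one hfint
              intervalIntegrable_const
            intro t ht
            exact Real.rpow_le_one_of_one_le_of_nonpos (hNlb t ht).le hzlt.le
        _ = 1 := by simp
    nlinarith [hintnn, hle1]
end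

section
/- Let k ≥ 1 be an integer. There exists a constant C > 0 (depending only on k) such that for every real exponent z with 1 < z < 2 and all vectors a, b ∈ ℝ^k, one has | |a|^{z−2} a − |a−b|^{z−2}(a−b) − |b|^{z−2} b | ≤ C |b|^{z−1}. -/
/-- Mean-value estimate for negative powers: for `0 < u ≤ v` and `-1 ≤ β ≤ 0`,
`|u^β - v^β| ≤ u^(β-1) * (v - u)`. -/
lemma aux_rpow_sub_le {u v β : ℝ} (hu : 0 < u) (huv : u ≤ v)
    (hβ1 : -1 ≤ β) (hβ0 : β ≤ 0) :
    |u ^ β - v ^ β| ≤ u ^ (β - 1) * (v - u) := by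
  have key := (convex_Ici u).norm_image_sub_le_of_norm_hasDerivWithin_le
    (f := fun t : ℝ => t ^ β) (f' := fun t : ℝ => β * t ^ (β - 1)) (C := u ^ (β - 1))
    (fun x hx => (Real.hasDerivAt_rpow_const
      (Or.inl (ne_of_gt (lt_of_lt_of_le hu hx)))).hasDerivWithinAt)
    (fun x hx => by
      have hx' : (0 : ℝ) < x := lt_of_lt_of_le hu hx
      rw [Real.norm_eq_abs, abs_mul, abs_of_nonneg (Real.rpow_nonneg hx'.le _)]
      calc |β| * x ^ (β - 1)
          ≤ 1 * u ^ (β - 1) := by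
            apply mul_le_mul (abs_le.mpr ⟨hβ1, by linarith⟩)
              (Real.rpow_le_rpow_of_nonpos hu hx (by linarith))
              (Real.rpow_nonneg hx'.le _) zero_le_one
        _ = u ^ (β - 1) := one_mul _)
    (Set.self_mem_Ici) (huv : v ∈ Set.Ici u)
  have key2 : |v ^ β - u ^ β| ≤ u ^ (β - 1) * (v - u) := by
    simpa [abs_of_nonneg (show (0:ℝ) ≤ v - u by linarith)] using key
  rwa [abs_sub_comm]

/-- For exponents `z ∈ (1,2)`, the Brezis–Lieb type pointwise estimate
`| |a|^{z-2} a − |a−b|^{z-2}(a−b) − |b|^{z-2} b | ≤ C |b|^{z-1}`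
holds with a constant depending only on `k`. -/
theorem pointwise_estimate_small_exponent (k : ℕ) (hk : 1 ≤ k) :
    ∃ C : ℝ, 0 < C ∧ ∀ z : ℝ, 1 < z → z < 2 →
      ∀ a b : EuclideanSpace ℝ (Fin k),
        ‖(‖a‖ ^ (z - 2)) • a - (‖a - b‖ ^ (z - 2)) • (a - b) - (‖b‖ ^ (z - 2)) • b‖ ≤
          C * ‖b‖ ^ (z - 1) := by
  refine ⟨8, by norm_num, ?_⟩
  intro z hz1 hz2 a b
  have hpow : ∀ x : ℝ, 0 ≤ x → x ^ (z - 2) * x = x ^ (z - 1) := by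
    intro x hx
    rcases eq_or_lt_of_le hx with h | h
    · rw [← h, Real.zero_rpow (by linarith : z - 2 ≠ 0),
        Real.zero_rpow (by linarith : z - 1 ≠ 0), zero_mul]
    · rw [← Real.rpow_add_one h.ne' (z - 2)]; congr 1; ring
  have hφ : ∀ x : EuclideanSpace ℝ (Fin k), ‖(‖x‖ ^ (z - 2)) • x‖ = ‖x‖ ^ (z - 1) := by
    intro x
    rw [norm_smul, Real.norm_eq_abs, abs_of_nonneg (Real.rpow_nonneg (norm_nonneg x) _)]
    exact hpow _ (norm_nonneg x)
  rcases eq_or_ne b 0 with rfl | hb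
  · simp only [sub_zero, norm_zero, smul_zero, sub_self]
    positivity
  have hBpos : 0 < ‖b‖ := norm_pos_iff.mpr hb
  have hBpow : 0 ≤ ‖b‖ ^ (z - 1) := Real.rpow_nonneg (norm_nonneg b) _
  rcases le_or_gt ‖a‖ (2 * ‖b‖) with hA | hA
  · -- crude triangle inequality case
    have h1 : ‖a‖ ^ (z - 1) ≤ 2 * ‖b‖ ^ (z - 1) := by
      calc ‖a‖ ^ (z - 1) ≤ (2 * ‖b‖) ^ (z - 1) :=
            Real.rpow_le_rpow (norm_nonneg a) hA (by linarith)
        _ = 2 ^ (z - 1) * ‖b‖ ^ (z - 1) := Real.mul_rpow (by norm_num) (norm_nonneg b)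
        _ ≤ 2 ^ (1 : ℝ) * ‖b‖ ^ (z - 1) := by
            apply mul_le_mul_of_nonneg_right
              (Real.rpow_le_rpow_of_exponent_le one_le_two (by linarith)) hBpow
        _ = 2 * ‖b‖ ^ (z - 1) := by rw [Real.rpow_one]
    have h2 : ‖a - b‖ ^ (z - 1) ≤ 3 * ‖b‖ ^ (z - 1) := by
      have hab : ‖a - b‖ ≤ 3 * ‖b‖ := by
        have := norm_sub_le a b; linarith
      calc ‖a - b‖ ^ (z - 1) ≤ (3 * ‖b‖) ^ (z - 1) :=
            Real.rpow_le_rpow (norm_nonneg _) hab (by linarith)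
        _ = 3 ^ (z - 1) * ‖b‖ ^ (z - 1) := Real.mul_rpow (by norm_num) (norm_nonneg b)
        _ ≤ 3 ^ (1 : ℝ) * ‖b‖ ^ (z - 1) := by
            apply mul_le_mul_of_nonneg_right
              (Real.rpow_le_rpow_of_exponent_le (by norm_num) (by linarith)) hBpow
        _ = 3 * ‖b‖ ^ (z - 1) := by rw [Real.rpow_one]
    calc ‖(‖a‖ ^ (z - 2)) • a - (‖a - b‖ ^ (z - 2)) • (a - b) - (‖b‖ ^ (z - 2)) • b‖
        ≤ ‖(‖a‖ ^ (z - 2)) • a - (‖a - b‖ ^ (z - 2)) • (a - b)‖ + ‖(‖b‖ ^ (z - 2)) • b‖ :=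
          norm_sub_le _ _
      _ ≤ ‖(‖a‖ ^ (z - 2)) • a‖ + ‖(‖a - b‖ ^ (z - 2)) • (a - b)‖ + ‖(‖b‖ ^ (z - 2)) • b‖ := by
          have := norm_sub_le ((‖a‖ ^ (z - 2)) • a) ((‖a - b‖ ^ (z - 2)) • (a - b))
          linarith
      _ = ‖a‖ ^ (z - 1) + ‖a - b‖ ^ (z - 1) + ‖b‖ ^ (z - 1) := by rw [hφ, hφ, hφ]
      _ ≤ 8 * ‖b‖ ^ (z - 1) := by linarith
  · -- far case : ‖a‖ > 2‖b‖
    have hApos : 0 < ‖a‖ := by linarith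
    have hDlow : ‖a‖ - ‖b‖ ≤ ‖a - b‖ := norm_sub_norm_le a b
    have hDpos : 0 < ‖a - b‖ := by linarith
    set A := ‖a‖ with hAdef
    set B := ‖b‖ with hBdef
    set D := ‖a - b‖ with hDdef
    -- regroup
    have hX : (A ^ (z - 2)) • a - (D ^ (z - 2)) • (a - b) - (B ^ (z - 2)) • b
        = (A ^ (z - 2) - D ^ (z - 2)) • (a - b) + ((A ^ (z - 2)) • b - (B ^ (z - 2)) • b) := by
      rw [sub_smul]; module
    set u := min A D with hu_def
    set v := max A D with hv_def
    have hupos : 0 < u := lt_min hApos hDpos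
    have huA2 : A / 2 ≤ u := by
      apply le_min (by linarith)
      -- A/2 ≤ D
      linarith
    have huv : u ≤ v := min_le_max
    have hvu : v - u ≤ B := by
      have habs : |A - D| ≤ ‖a - (a - b)‖ := abs_norm_sub_norm_le a (a - b)
      have : a - (a - b) = b := by abel
      rw [this] at habs
      rcases le_total A D with h | h
      · simp only [hu_def, hv_def, min_eq_left h, max_eq_right h]
        rw [abs_sub_comm, abs_of_nonneg (by linarith)] at habs
        linarith
      · simp only [hu_def, hv_def, min_eq_right h, max_eq_left h]
        rw [abs_of_nonneg (by linarith)] at habs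
        linarith
    have hdiff : |A ^ (z - 2) - D ^ (z - 2)| ≤ u ^ (z - 2 - 1) * B := by
      have key := aux_rpow_sub_le hupos huv (by linarith : (-1 : ℝ) ≤ z - 2) (by linarith)
      have h2 : |A ^ (z - 2) - D ^ (z - 2)| = |u ^ (z - 2) - v ^ (z - 2)| := by
        rcases le_total A D with h | h
        · simp [hu_def, hv_def, min_eq_left h, max_eq_right h]
        · simp [hu_def, hv_def, min_eq_right h, max_eq_left h, abs_sub_comm]
      rw [h2]
      calc |u ^ (z - 2) - v ^ (z - 2)| ≤ u ^ (z - 2 - 1) * (v - u) := key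
        _ ≤ u ^ (z - 2 - 1) * B :=
            mul_le_mul_of_nonneg_left hvu (Real.rpow_nonneg hupos.le _)
    have hD3u : D ≤ 3 * u := by
      have : D ≤ A + B := by
        have := norm_sub_le a b; linarith [norm_sub_le a b]
      linarith
    have hBu : B ≤ u := by linarith
    -- term 1
    have ht1 : ‖(A ^ (z - 2) - D ^ (z - 2)) • (a - b)‖ ≤ 3 * B ^ (z - 1) := by
      rw [norm_smul, Real.norm_eq_abs]
      calc |A ^ (z - 2) - D ^ (z - 2)| * D
          ≤ (u ^ (z - 2 - 1) * B) * (3 * u) := by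
            apply mul_le_mul hdiff hD3u hDpos.le
            positivity
        _ = 3 * (u ^ (z - 2 - 1) * u) * B := by ring
        _ = 3 * u ^ (z - 2) * B := by
            rw [← Real.rpow_add_one hupos.ne' (z - 2 - 1)]; congr 2; ring
        _ ≤ 3 * B ^ (z - 2) * B := by
            apply mul_le_mul_of_nonneg_right _ hBpos.le
            have := Real.rpow_le_rpow_of_nonpos hBpos hBu (by linarith : z - 2 ≤ 0)
            linarith
        _ = 3 * B ^ (z - 1) := by rw [mul_assoc, hpow B hBpos.le]
    -- term 2
    have ht2 : ‖(A ^ (z - 2)) • b - (B ^ (z - 2)) • b‖ ≤ 2 * B ^ (z - 1) := by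
      have hAB : A ^ (z - 2) ≤ B ^ (z - 2) :=
        Real.rpow_le_rpow_of_nonpos hBpos (by linarith) (by linarith)
      calc ‖(A ^ (z - 2)) • b - (B ^ (z - 2)) • b‖
          ≤ ‖(A ^ (z - 2)) • b‖ + ‖(B ^ (z - 2)) • b‖ := norm_sub_le _ _
        _ = A ^ (z - 2) * B + B ^ (z - 2) * B := by
            rw [norm_smul, norm_smul, Real.norm_eq_abs,
              abs_of_nonneg (Real.rpow_nonneg hApos.le _), Real.norm_eq_abs,
              abs_of_nonneg (Real.rpow_nonneg hBpos.le _)]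
        _ ≤ B ^ (z - 2) * B + B ^ (z - 2) * B := by
            have := mul_le_mul_of_nonneg_right hAB hBpos.le
            linarith
        _ = 2 * B ^ (z - 1) := by rw [hpow B hBpos.le]; ring
    calc ‖(A ^ (z - 2)) • a - (D ^ (z - 2)) • (a - b) - (B ^ (z - 2)) • b‖
        = ‖(A ^ (z - 2) - D ^ (z - 2)) • (a - b)
            + ((A ^ (z - 2)) • b - (B ^ (z - 2)) • b)‖ := by rw [hX]
      _ ≤ ‖(A ^ (z - 2) - D ^ (z - 2)) • (a - b)‖
            + ‖(A ^ (z - 2)) • b - (B ^ (z - 2)) • b‖ := norm_add_le _ _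
      _ ≤ 3 * B ^ (z - 1) + 2 * B ^ (z - 1) := add_le_add ht1 ht2
      _ ≤ 8 * B ^ (z - 1) := by
          have : 0 ≤ B ^ (z - 1) := Real.rpow_nonneg hBpos.le _
          linarith
end

section
/- Let k ≥ 1 be an integer and let z₊ ≥ 2 be a real number. For every ε > 0 there exists a constant C = C(ε, k, z₊) > 0 such that for every real exponent z with 2 ≤ z ≤ z₊ and all vectors a, b ∈ ℝ^k, one has | |a|^{z−2} a − |a−b|^{z−2}(a−b) | ≤ C |b|^{z−1} + ε |a|^{z−1}. -/
/-- Mean value estimate for `x ↦ x ^ p` on an interval of positive reals. -/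
lemma mvt_rpow_aux (p K m M : ℝ) (hp : 0 ≤ p) (hm : 0 < m)
    (hK : ∀ x ∈ Set.Icc m M, p * x ^ (p - 1) ≤ K)
    {s t : ℝ} (hs : s ∈ Set.Icc m M) (ht : t ∈ Set.Icc m M) :
    |s ^ p - t ^ p| ≤ K * |s - t| := by
  have h := Convex.norm_image_sub_le_of_norm_hasDerivWithin_le
    (f := fun x : ℝ => x ^ p) (f' := fun x : ℝ => p * x ^ (p - 1))
    (s := Set.Icc m M) (C := K)
    (fun x hx => (Real.hasDerivAt_rpow_const
      (Or.inl (hm.trans_le hx.1).ne')).hasDerivWithinAt)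
    (fun x hx => by
      rw [Real.norm_eq_abs, abs_of_nonneg
        (mul_nonneg hp (Real.rpow_nonneg (hm.trans_le hx.1).le _))]
      exact hK x hx)
    (convex_Icc m M) ht hs
  simpa [Real.norm_eq_abs] using h

set_option maxHeartbeats 1000000 in
/-- For exponents `2 ≤ z ≤ z₊` and every `ε > 0` there is `C = C(ε,k,z₊) > 0` with
`| |a|^{z-2} a − |a−b|^{z-2}(a−b) | ≤ C |b|^{z−1} + ε |a|^{z−1}`. -/
theorem young_type_estimate_large_exponent (k : ℕ) (hk : 1 ≤ k) (zp : ℝ) (hzp : 2 ≤ zp) :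
    ∀ ε : ℝ, 0 < ε → ∃ C : ℝ, 0 < C ∧ ∀ z : ℝ, 2 ≤ z → z ≤ zp →
      ∀ a b : EuclideanSpace ℝ (Fin k),
        ‖(‖a‖ ^ (z - 2)) • a - (‖a - b‖ ^ (z - 2)) • (a - b)‖ ≤
          C * ‖b‖ ^ (z - 1) + ε * ‖a‖ ^ (z - 1) := by
  intro ε hε
  have hzp0 : (0:ℝ) < zp := by linarith
  set M₀ : ℝ := 2 + (3/2 : ℝ) ^ zp with hM₀def
  have h32pos : (0:ℝ) < (3/2 : ℝ) ^ zp := Real.rpow_pos_of_pos (by norm_num) _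
  have hM₀pos : 0 < M₀ := by positivity
  set D : ℝ := (3/2 : ℝ) ^ zp + zp * M₀ with hDdef
  have hDpos : 0 < D := by positivity
  set δ : ℝ := min (1/2) (ε / D) with hδdef
  have hδpos : 0 < δ := lt_min (by norm_num) (div_pos hε hDpos)
  have hδhalf : δ ≤ 1/2 := min_le_left _ _
  have hδD : δ * D ≤ ε := by
    have : δ ≤ ε / D := min_le_right _ _
    calc δ * D ≤ (ε / D) * D := mul_le_mul_of_nonneg_right this hDpos.le
    _ = ε := by field_simp
  refine ⟨2 * (1 + 1/δ) ^ zp, by positivity, ?_⟩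
  intro z hz2 hzzp a b
  clear_value M₀ D δ
  have hz1 : (1:ℝ) ≤ z - 1 := by linarith
  have hp2 : (0:ℝ) ≤ z - 2 := by linarith
  set A := ‖a‖ with hAdef
  set B := ‖b‖ with hBdef
  set T := ‖a - b‖ with hTdef
  have hA : 0 ≤ A := norm_nonneg _
  have hB : 0 ≤ B := norm_nonneg _
  have hT : 0 ≤ T := norm_nonneg _
  have hTab : T ≤ A + B := norm_sub_le a b
  have hATB : |A - T| ≤ B := by
    have h := abs_norm_sub_norm_le a (a - b)
    simpa using h
  clear_value A B T
  have hδinv : (0:ℝ) < 1/δ := one_div_pos.mpr hδpos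
  have hnorm : ∀ v : EuclideanSpace ℝ (Fin k), ‖(‖v‖ ^ (z - 2)) • v‖ = ‖v‖ ^ (z - 1) := by
    intro v
    rw [norm_smul, Real.norm_eq_abs, abs_of_nonneg (Real.rpow_nonneg (norm_nonneg v) _)]
    rcases eq_or_ne v 0 with h | h
    · simp [h, Real.zero_rpow (by linarith : z - 1 ≠ 0)]
    · rw [show z - 1 = z - 2 + 1 by ring, Real.rpow_add_one (norm_ne_zero_iff.mpr h)]
  rcases le_or_gt B (δ * A) with hcase | hcase
  · -- B ≤ δ A : small perturbation case
    rcases eq_or_ne a 0 with ha | ha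
    · have hA0 : A = 0 := by rw [hAdef, ha, norm_zero]
      have hb : b = 0 := by
        have hB0 : B = 0 := le_antisymm (by rw [hA0] at hcase; simpa using hcase) hB
        rw [hBdef] at hB0; exact norm_eq_zero.mp hB0
      simp [ha, hb, hAdef, hBdef, hTdef, Real.zero_rpow (show z - 1 ≠ 0 by linarith)]
    · have hA0 : 0 < A := by rw [hAdef]; exact norm_pos_iff.mpr ha
      have hBA : B ≤ A / 2 := by nlinarith
      have habsle := abs_le.mp hATB
      have hT1 : A / 2 ≤ T := by linarith [habsle.2]
      have hT2 : T ≤ 3 * A / 2 := by linarith [habsle.1]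
      have hKbd : ∀ x ∈ Set.Icc (A/2) (3*A/2),
          (z-2) * x ^ (z - 2 - 1) ≤ (z-2) * (M₀ * A ^ (z-3)) := by
        intro x hx
        have hx0 : 0 < x := lt_of_lt_of_le (by linarith) hx.1
        have hAq : (0:ℝ) ≤ A ^ (z-3) := Real.rpow_nonneg hA _
        have hxq : x ^ (z - 2 - 1) ≤ M₀ * A ^ (z-3) := by
          rw [show z - 2 - 1 = z - 3 by ring]
          rcases le_or_gt 3 z with h3 | h3
          · have hq : (0:ℝ) ≤ z - 3 := by linarith
            calc x ^ (z-3) ≤ (3/2 * A) ^ (z-3) :=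
                  Real.rpow_le_rpow hx0.le (by linarith [hx.2]) hq
              _ = (3/2:ℝ) ^ (z-3) * A ^ (z-3) := Real.mul_rpow (by norm_num) hA
              _ ≤ (3/2:ℝ) ^ zp * A ^ (z-3) := by
                  have h := Real.rpow_le_rpow_of_exponent_le
                    (show (1:ℝ) ≤ 3/2 by norm_num) (show z - 3 ≤ zp by linarith)
                  nlinarith
              _ ≤ M₀ * A ^ (z-3) := by nlinarith
          · have hq : z - 3 ≤ 0 := by linarith
            have h1 : x ^ (z-3) ≤ (A/2) ^ (z-3) :=
              Real.rpow_le_rpow_of_nonpos (by linarith) hx.1 hq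
            have h2 : (A/2 : ℝ) ^ (z-3) = (2:ℝ) ^ (3-z) * A ^ (z-3) := by
              rw [show (A/2 : ℝ) = (2:ℝ)⁻¹ * A by ring,
                Real.mul_rpow (by norm_num) hA,
                Real.inv_rpow (by norm_num : (0:ℝ) ≤ 2),
                show (3:ℝ) - z = -(z-3) by ring,
                Real.rpow_neg (by norm_num : (0:ℝ) ≤ 2)]
            have h3' : (2:ℝ) ^ (3-z) ≤ 2 := by
              calc (2:ℝ) ^ (3-z) ≤ (2:ℝ) ^ (1:ℝ) :=
                    Real.rpow_le_rpow_of_exponent_le one_le_two (by linarith)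
                _ = 2 := Real.rpow_one 2
            calc x ^ (z-3) ≤ (2:ℝ) ^ (3-z) * A ^ (z-3) := by rw [← h2]; exact h1
              _ ≤ 2 * A ^ (z-3) := by nlinarith
              _ ≤ M₀ * A ^ (z-3) := by nlinarith
        exact mul_le_mul_of_nonneg_left hxq hp2
      have hmvt : |A ^ (z-2) - T ^ (z-2)| ≤ (z-2) * (M₀ * A ^ (z-3)) * |A - T| :=
        mvt_rpow_aux (z-2) _ (A/2) (3*A/2) hp2 (by linarith) hKbd
          ⟨by linarith, by linarith⟩ ⟨hT1, hT2⟩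
      have hdec : (A ^ (z - 2)) • a - (T ^ (z - 2)) • (a - b)
          = (A ^ (z-2) - T ^ (z-2)) • a + (T ^ (z-2)) • b := by
        rw [sub_smul, smul_sub]; abel
      have hTp : T ^ (z-2) ≤ (3/2:ℝ) ^ zp * A ^ (z-2) := by
        calc T ^ (z-2) ≤ (3/2 * A) ^ (z-2) := Real.rpow_le_rpow hT (by linarith) hp2
          _ = (3/2:ℝ) ^ (z-2) * A ^ (z-2) := Real.mul_rpow (by norm_num) hA
          _ ≤ (3/2:ℝ) ^ zp * A ^ (z-2) := by
              have h := Real.rpow_le_rpow_of_exponent_le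
                (show (1:ℝ) ≤ 3/2 by norm_num) (show z - 2 ≤ zp by linarith)
              nlinarith [Real.rpow_nonneg hA (z-2)]
      have hA32 : A ^ (z-3) * A = A ^ (z-2) := by
        rw [show z - 2 = (z-3) + 1 by ring, Real.rpow_add_one hA0.ne']
      have hA21 : A ^ (z-2) * A = A ^ (z-1) := by
        rw [show z - 1 = (z-2) + 1 by ring, Real.rpow_add_one hA0.ne']
      have main : ‖(A ^ (z - 2)) • a - (T ^ (z - 2)) • (a - b)‖
          ≤ |A ^ (z-2) - T ^ (z-2)| * A + T ^ (z-2) * B := by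
        rw [hdec]
        refine (norm_add_le _ _).trans ?_
        rw [norm_smul, norm_smul, Real.norm_eq_abs, Real.norm_eq_abs,
          abs_of_nonneg (Real.rpow_nonneg hT _), ← hAdef, ← hBdef]
      have hK0 : 0 ≤ (z-2) * (M₀ * A ^ (z-3)) :=
        mul_nonneg hp2 (mul_nonneg hM₀pos.le (Real.rpow_nonneg hA _))
      have t1 : |A ^ (z-2) - T ^ (z-2)| * A ≤ zp * M₀ * δ * A ^ (z-1) := by
        calc |A ^ (z-2) - T ^ (z-2)| * A
            ≤ ((z-2) * (M₀ * A ^ (z-3)) * B) * A := by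
              refine mul_le_mul_of_nonneg_right ?_ hA
              exact hmvt.trans (mul_le_mul_of_nonneg_left hATB hK0)
          _ = (z-2) * M₀ * B * (A ^ (z-3) * A) := by ring
          _ = (z-2) * M₀ * B * A ^ (z-2) := by rw [hA32]
          _ ≤ (z-2) * M₀ * (δ * A) * A ^ (z-2) := by
              refine mul_le_mul_of_nonneg_right ?_ (Real.rpow_nonneg hA _)
              exact mul_le_mul_of_nonneg_left hcase (mul_nonneg hp2 hM₀pos.le)
          _ = (z-2) * M₀ * δ * (A ^ (z-2) * A) := by ring
          _ = (z-2) * M₀ * δ * A ^ (z-1) := by rw [hA21]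
          _ ≤ zp * M₀ * δ * A ^ (z-1) := by
              refine mul_le_mul_of_nonneg_right ?_ (Real.rpow_nonneg hA _)
              nlinarith [mul_pos hM₀pos hδpos]
      have t2 : T ^ (z-2) * B ≤ (3/2:ℝ) ^ zp * δ * A ^ (z-1) := by
        calc T ^ (z-2) * B ≤ ((3/2:ℝ) ^ zp * A ^ (z-2)) * (δ * A) := by
              refine mul_le_mul hTp hcase hB ?_
              exact mul_nonneg h32pos.le (Real.rpow_nonneg hA _)
          _ = (3/2:ℝ) ^ zp * δ * (A ^ (z-2) * A) := by ring
          _ = (3/2:ℝ) ^ zp * δ * A ^ (z-1) := by rw [hA21]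
      have hsum : zp * M₀ * δ * A ^ (z-1) + (3/2:ℝ) ^ zp * δ * A ^ (z-1)
          = (δ * D) * A ^ (z-1) := by rw [hDdef]; ring
      have hεD : (δ * D) * A ^ (z-1) ≤ ε * A ^ (z-1) :=
        mul_le_mul_of_nonneg_right hδD (Real.rpow_nonneg hA _)
      have hCB : 0 ≤ 2 * (1 + 1/δ) ^ zp * B ^ (z-1) :=
        mul_nonneg (mul_nonneg (by norm_num)
          (Real.rpow_nonneg (by linarith) _)) (Real.rpow_nonneg hB _)
      linarith [main, t1, t2]
  · -- δ A < B : large b case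
    have hAB : A ≤ B / δ := by
      rw [le_div_iff₀ hδpos]
      nlinarith
    have hbase : (1:ℝ) ≤ 1 + 1/δ := by linarith
    have key : ∀ x : ℝ, 0 ≤ x → x ≤ (1 + 1/δ) * B →
        x ^ (z-1) ≤ (1 + 1/δ) ^ zp * B ^ (z-1) := by
      intro x hx hxle
      calc x ^ (z-1) ≤ ((1 + 1/δ) * B) ^ (z-1) :=
            Real.rpow_le_rpow hx hxle (by linarith)
        _ = (1 + 1/δ) ^ (z-1) * B ^ (z-1) := Real.mul_rpow (by linarith) hB
        _ ≤ (1 + 1/δ) ^ zp * B ^ (z-1) := by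
            have := Real.rpow_le_rpow_of_exponent_le hbase (show z - 1 ≤ zp by linarith)
            have hBz : (0:ℝ) ≤ B ^ (z-1) := Real.rpow_nonneg hB _
            nlinarith
    have hA1 : A ^ (z-1) ≤ (1 + 1/δ) ^ zp * B ^ (z-1) := by
      refine key A hA ?_
      calc A ≤ B / δ := hAB
        _ = (1/δ) * B := by ring
        _ ≤ (1 + 1/δ) * B := by nlinarith
    have hT1 : T ^ (z-1) ≤ (1 + 1/δ) ^ zp * B ^ (z-1) := by
      refine key T hT ?_
      calc T ≤ A + B := hTab
        _ ≤ B / δ + B := by linarith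
        _ = (1 + 1/δ) * B := by field_simp; ring
    have hεA : 0 ≤ ε * A ^ (z-1) := mul_nonneg hε.le (Real.rpow_nonneg hA _)
    calc ‖(A ^ (z - 2)) • a - (T ^ (z - 2)) • (a - b)‖
        ≤ ‖(A ^ (z - 2)) • a‖ + ‖(T ^ (z - 2)) • (a - b)‖ := norm_sub_le _ _
      _ = A ^ (z-1) + T ^ (z-1) := by
          rw [show ‖(A ^ (z - 2)) • a‖ = A ^ (z-1) by rw [hAdef]; exact hnorm a,
            show ‖(T ^ (z - 2)) • (a - b)‖ = T ^ (z-1) by rw [hTdef]; exact hnorm (a - b)]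
      _ ≤ 2 * (1 + 1/δ) ^ zp * B ^ (z-1) := by linarith
      _ ≤ 2 * (1 + 1/δ) ^ zp * B ^ (z-1) + ε * A ^ (z-1) := by linarith
end

section
/- Let k ≥ 1 be an integer and let p ≥ 2 be a real number. For all vectors a, b ∈ ℝ^k, one has ⟨ |a|^{p−2} a − |b|^{p−2} b , a − b ⟩ ≥ (2^{3−p}/p) |a − b|^{p}. -/
private lemma rpow_succ_aux (x : ℝ) (hx : 0 ≤ x) (e : ℝ) (he : 0 ≤ e) :
    x ^ e * x = x ^ (e + 1) := by
  rcases eq_or_lt_of_le hx with h | h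
  · rw [← h, Real.zero_rpow (by linarith : e + 1 ≠ 0), mul_zero]
  · rw [Real.rpow_add_one h.ne']

private lemma rpow_pred_mul_aux (x : ℝ) (hx : 0 ≤ x) (q : ℝ) (hq : 1 ≤ q) :
    x ^ (q - 1) * x = x ^ q := by
  rw [rpow_succ_aux x hx (q - 1) (by linarith), sub_add_cancel]

private lemma sq_rpow_half_aux (x p : ℝ) : ((x ^ 2 : ℝ)) ^ (p / 2) = |x| ^ p := by
  rw [← sq_abs, ← Real.rpow_natCast |x| 2, ← Real.rpow_mul (abs_nonneg x)]
  norm_num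
  rw [show (2 : ℝ) * (p / 2) = p by ring]

private lemma superadd_aux (x y q : ℝ) (hx : 0 ≤ x) (hy : 0 ≤ y) (hq : 1 ≤ q) :
    x ^ q + y ^ q ≤ (x + y) ^ q := by
  have hq0 : 0 ≤ q - 1 := by linarith
  have h1 : x ^ (q - 1) ≤ (x + y) ^ (q - 1) :=
    Real.rpow_le_rpow hx (by linarith) hq0
  have h2 : y ^ (q - 1) ≤ (x + y) ^ (q - 1) :=
    Real.rpow_le_rpow hy (by linarith) hq0
  calc x ^ q + y ^ q = x ^ (q - 1) * x + y ^ (q - 1) * y := by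
        rw [rpow_pred_mul_aux x hx q hq, rpow_pred_mul_aux y hy q hq]
    _ ≤ (x + y) ^ (q - 1) * x + (x + y) ^ (q - 1) * y := by
        exact add_le_add (mul_le_mul_of_nonneg_right h1 hx)
          (mul_le_mul_of_nonneg_right h2 hy)
    _ = (x + y) ^ (q - 1) * (x + y) := by ring
    _ = (x + y) ^ q := rpow_pred_mul_aux (x + y) (by linarith) q hq

private lemma c_le_one_aux (p : ℝ) (hp : 2 ≤ p) : (2 : ℝ) ^ (3 - p) / p ≤ 1 := by
  have h1 : (2 : ℝ) ^ (3 - p) ≤ 2 ^ (1 : ℝ) :=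
    Real.rpow_le_rpow_of_exponent_le (by norm_num) (by linarith)
  rw [Real.rpow_one] at h1
  rw [div_le_one (by linarith : (0:ℝ) < p)]
  linarith

private lemma c_nonneg_aux (p : ℝ) (hp : 2 ≤ p) : 0 ≤ (2 : ℝ) ^ (3 - p) / p :=
  div_nonneg (Real.rpow_pos_of_pos (by norm_num) _).le (by linarith)

/-- Endpoint case `s = A*B` (with `B ≤ A`). -/
private lemma E1_aux (p : ℝ) (hp : 2 ≤ p) (A B : ℝ) (hB : 0 ≤ B) (hBA : B ≤ A) :
    (2 ^ (3 - p) / p) * ((A - B) ^ 2) ^ (p / 2)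
      ≤ A ^ p + B ^ p - (A ^ (p - 1) * B + B ^ (p - 1) * A) := by
  have hA0 : 0 ≤ A := le_trans hB hBA
  have hq : (1 : ℝ) ≤ p - 1 := by linarith
  have hp1 : (1 : ℝ) ≤ p := by linarith
  have hAB : 0 ≤ A - B := by linarith
  have hsup : (A - B) ^ (p - 1) + B ^ (p - 1) ≤ A ^ (p - 1) := by
    have := superadd_aux (A - B) B (p - 1) hAB hB hq
    simpa using this
  have hc1 := c_le_one_aux p hp
  have hc0 := c_nonneg_aux p hp
  have hrw : ((A - B) ^ 2 : ℝ) ^ (p / 2) = (A - B) ^ (p - 1) * (A - B) := by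
    rw [sq_rpow_half_aux, abs_of_nonneg hAB, rpow_pred_mul_aux (A - B) hAB p hp1]
  have eA : A ^ p = A ^ (p - 1) * A := (rpow_pred_mul_aux A hA0 p hp1).symm
  have eB : B ^ p = B ^ (p - 1) * B := (rpow_pred_mul_aux B hB p hp1).symm
  rw [hrw, eA, eB]
  have key : (2 ^ (3 - p) / p) * (A - B) ^ (p - 1) ≤ A ^ (p - 1) - B ^ (p - 1) := by
    have h2 : (2 ^ (3 - p) / p) * (A - B) ^ (p - 1) ≤ 1 * (A - B) ^ (p - 1) :=
      mul_le_mul_of_nonneg_right hc1 (Real.rpow_nonneg hAB _)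
    linarith
  calc (2 ^ (3 - p) / p) * ((A - B) ^ (p - 1) * (A - B))
      = ((2 ^ (3 - p) / p) * (A - B) ^ (p - 1)) * (A - B) := by ring
    _ ≤ (A ^ (p - 1) - B ^ (p - 1)) * (A - B) := mul_le_mul_of_nonneg_right key hAB
    _ = A ^ (p - 1) * A + B ^ (p - 1) * B - (A ^ (p - 1) * B + B ^ (p - 1) * A) := by ring

/-- Endpoint case `s = -(A*B)`. -/
private lemma E2_aux (p : ℝ) (hp : 2 ≤ p) (A B : ℝ) (hA : 0 ≤ A) (hB : 0 ≤ B) :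
    (2 ^ (3 - p) / p) * ((A + B) ^ 2) ^ (p / 2)
      ≤ A ^ p + B ^ p + (A ^ (p - 1) * B + B ^ (p - 1) * A) := by
  have hq : (1 : ℝ) ≤ p - 1 := by linarith
  have hp1 : (1 : ℝ) ≤ p := by linarith
  have hAB : 0 ≤ A + B := by linarith
  have hc0 := c_nonneg_aux p hp
  have hrw : ((A + B) ^ 2 : ℝ) ^ (p / 2) = (A + B) ^ (p - 1) * (A + B) := by
    rw [sq_rpow_half_aux, abs_of_nonneg hAB, rpow_pred_mul_aux (A + B) hAB p hp1]
  have eA : A ^ p = A ^ (p - 1) * A := (rpow_pred_mul_aux A hA p hp1).symm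
  have eB : B ^ p = B ^ (p - 1) * B := (rpow_pred_mul_aux B hB p hp1).symm
  rw [hrw, eA, eB]
  have h2p : (0:ℝ) ≤ (2:ℝ) ^ (p - 1) := (Real.rpow_pos_of_pos (by norm_num) _).le
  have hhalf : ((A + B) / 2) ^ (p - 1) ≤ (A ^ (p - 1) + B ^ (p - 1)) / 2 := by
    have hconv := (convexOn_rpow hq).2 (Set.mem_Ici.mpr hA) (Set.mem_Ici.mpr hB)
      (by norm_num : (0:ℝ) ≤ 1/2) (by norm_num : (0:ℝ) ≤ 1/2) (by norm_num)
    simp only [smul_eq_mul] at hconv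
    rw [show (A + B) / 2 = 1/2 * A + 1/2 * B by ring]
    linarith
  have hmul : (A + B) ^ (p - 1) = 2 ^ (p - 1) * ((A + B) / 2) ^ (p - 1) := by
    rw [← Real.mul_rpow (by norm_num) (by linarith : (0:ℝ) ≤ (A + B) / 2)]
    congr 1
    ring
  have h2 : (2 : ℝ) ^ (3 - p) / p * 2 ^ (p - 1) = 4 / p := by
    rw [div_mul_eq_mul_div, ← Real.rpow_add (by norm_num : (0:ℝ) < 2),
      show (3 - p) + (p - 1) = ((2:ℕ):ℝ) by push_cast; ring, Real.rpow_natCast]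
    norm_num
  have hApos : 0 ≤ A ^ (p - 1) := Real.rpow_nonneg hA _
  have hBpos : 0 ≤ B ^ (p - 1) := Real.rpow_nonneg hB _
  have h2p' : (2 : ℝ) / p ≤ 1 := by
    rw [div_le_one (by linarith : (0:ℝ) < p)]; linarith
  have hkey : (2 ^ (3 - p) / p) * (A + B) ^ (p - 1) ≤ A ^ (p - 1) + B ^ (p - 1) := by
    calc (2 ^ (3 - p) / p) * (A + B) ^ (p - 1)
        = (2 ^ (3 - p) / p * 2 ^ (p - 1)) * ((A + B) / 2) ^ (p - 1) := by
          rw [hmul]; ring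
      _ = (4 / p) * ((A + B) / 2) ^ (p - 1) := by rw [h2]
      _ ≤ (4 / p) * ((A ^ (p - 1) + B ^ (p - 1)) / 2) := by
          apply mul_le_mul_of_nonneg_left hhalf
          positivity
      _ = (2 / p) * (A ^ (p - 1) + B ^ (p - 1)) := by ring
      _ ≤ 1 * (A ^ (p - 1) + B ^ (p - 1)) :=
          mul_le_mul_of_nonneg_right h2p' (by positivity)
      _ = A ^ (p - 1) + B ^ (p - 1) := by ring
  calc (2 ^ (3 - p) / p) * ((A + B) ^ (p - 1) * (A + B))
      = ((2 ^ (3 - p) / p) * (A + B) ^ (p - 1)) * (A + B) := by ring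
    _ ≤ (A ^ (p - 1) + B ^ (p - 1)) * (A + B) := mul_le_mul_of_nonneg_right hkey hAB
    _ = A ^ (p - 1) * A + B ^ (p - 1) * B + (A ^ (p - 1) * B + B ^ (p - 1) * A) := by ring

/-- Core scalar inequality. -/
private lemma key_aux (p : ℝ) (hp : 2 ≤ p) (A B s : ℝ) (hA : 0 ≤ A) (hB : 0 ≤ B)
    (hs : |s| ≤ A * B) :
    (2 ^ (3 - p) / p) * (A ^ 2 + B ^ 2 - 2 * s) ^ (p / 2)
      ≤ A ^ p + B ^ p - (A ^ (p - 2) + B ^ (p - 2)) * s := by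
  have hc0 := c_nonneg_aux p hp
  have hc1 := c_le_one_aux p hp
  have hsl : -(A * B) ≤ s := neg_le_of_abs_le hs
  have hsu : s ≤ A * B := le_of_abs_le hs
  rcases eq_or_lt_of_le (mul_nonneg hA hB) with hAB | hAB
  · -- A*B = 0, so s = 0
    have hs0 : s = 0 := by
      have h' : |s| ≤ 0 := by rw [← hAB] at hs; exact hs
      simpa using abs_nonpos_iff.mp h'
    subst hs0
    have hkA : ∀ X : ℝ, 0 ≤ X → (2 ^ (3 - p) / p) * (X ^ 2) ^ (p / 2) ≤ X ^ p := by
      intro X hX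
      rw [sq_rpow_half_aux, abs_of_nonneg hX]
      have h1 : (2 ^ (3 - p) / p) * X ^ p ≤ 1 * X ^ p :=
        mul_le_mul_of_nonneg_right hc1 (Real.rpow_nonneg hX _)
      linarith
    have h0p : (0:ℝ) ^ p = 0 := Real.zero_rpow (by linarith)
    rcases mul_eq_zero.mp hAB.symm with h | h
    · subst h
      simp only [mul_zero, sub_zero, h0p, zero_add]
      have e : ((0:ℝ) ^ 2 + B ^ 2 : ℝ) = B ^ 2 := by norm_num
      rw [e]
      exact hkA B hB
    · subst h
      simp only [mul_zero, sub_zero, h0p, add_zero]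
      have e : (A ^ 2 + (0:ℝ) ^ 2 : ℝ) = A ^ 2 := by norm_num
      rw [e]
      exact hkA A hA
  · -- A*B > 0
    have hApos : 0 < A := lt_of_le_of_ne hA (by rintro rfl; simp at hAB)
    have hBpos : 0 < B := lt_of_le_of_ne hB (by rintro rfl; simp at hAB)
    set l : ℝ := (A * B + s) / (2 * (A * B)) with hl_def
    have hl0 : 0 ≤ l := div_nonneg (by linarith) (by linarith)
    have hl1 : l ≤ 1 := by
      rw [div_le_one (by linarith : 0 < 2 * (A * B))]
      linarith
    have harg : A ^ 2 + B ^ 2 - 2 * s = l * (A - B) ^ 2 + (1 - l) * (A + B) ^ 2 := by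
      rw [hl_def]; field_simp; ring
    have hpc : (1:ℝ) ≤ p / 2 := by linarith
    have hconv := (convexOn_rpow hpc).2
      (Set.mem_Ici.mpr (sq_nonneg (A - B))) (Set.mem_Ici.mpr (sq_nonneg (A + B)))
      hl0 (by linarith : (0:ℝ) ≤ 1 - l) (by ring)
    simp only [smul_eq_mul] at hconv
    rw [harg]
    have hE1 : (2 ^ (3 - p) / p) * ((A - B) ^ 2) ^ (p / 2)
        ≤ A ^ p + B ^ p - (A ^ (p - 1) * B + B ^ (p - 1) * A) := by
      rcases le_total B A with h | h
      · exact E1_aux p hp A B hB h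
      · have h' := E1_aux p hp B A hA h
        calc (2 ^ (3 - p) / p) * ((A - B) ^ 2) ^ (p / 2)
            = (2 ^ (3 - p) / p) * ((B - A) ^ 2) ^ (p / 2) := by
              rw [show (A - B) ^ 2 = (B - A) ^ 2 by ring]
          _ ≤ B ^ p + A ^ p - (B ^ (p - 1) * A + A ^ (p - 1) * B) := h'
          _ = A ^ p + B ^ p - (A ^ (p - 1) * B + B ^ (p - 1) * A) := by ring
    have hE2 := E2_aux p hp A B hA hB
    have hfin : l * (A ^ p + B ^ p - (A ^ (p - 1) * B + B ^ (p - 1) * A))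
          + (1 - l) * (A ^ p + B ^ p + (A ^ (p - 1) * B + B ^ (p - 1) * A))
        = A ^ p + B ^ p - (A ^ (p - 2) + B ^ (p - 2)) * s := by
      have cA : A ^ (p - 2) * A = A ^ (p - 1) := by
        rw [rpow_succ_aux A hA (p - 2) (by linarith), show p - 2 + 1 = p - 1 by ring]
      have cB : B ^ (p - 2) * B = B ^ (p - 1) := by
        rw [rpow_succ_aux B hB (p - 2) (by linarith), show p - 2 + 1 = p - 1 by ring]
      have hx : A ^ (p - 1) * B + B ^ (p - 1) * A = (A ^ (p - 2) + B ^ (p - 2)) * (A * B) := by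
        rw [← cA, ← cB]; ring
      rw [hx, hl_def]
      field_simp
      ring
    calc (2 ^ (3 - p) / p) * (l * (A - B) ^ 2 + (1 - l) * (A + B) ^ 2) ^ (p / 2)
        ≤ (2 ^ (3 - p) / p) * (l * ((A - B) ^ 2) ^ (p / 2)
            + (1 - l) * ((A + B) ^ 2) ^ (p / 2)) := mul_le_mul_of_nonneg_left hconv hc0
      _ = l * ((2 ^ (3 - p) / p) * ((A - B) ^ 2) ^ (p / 2))
            + (1 - l) * ((2 ^ (3 - p) / p) * ((A + B) ^ 2) ^ (p / 2)) := by ring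
      _ ≤ l * (A ^ p + B ^ p - (A ^ (p - 1) * B + B ^ (p - 1) * A))
            + (1 - l) * (A ^ p + B ^ p + (A ^ (p - 1) * B + B ^ (p - 1) * A)) :=
          add_le_add (mul_le_mul_of_nonneg_left hE1 hl0)
            (mul_le_mul_of_nonneg_left hE2 (by linarith))
      _ = A ^ p + B ^ p - (A ^ (p - 2) + B ^ (p - 2)) * s := hfin

/-- Monotonicity inequality for the `p`-Laplacian vector field, case `p ≥ 2`. -/
theorem p_laplacian_monotonicity_large_p (k : ℕ) (hk : 1 ≤ k) (p : ℝ) (hp : 2 ≤ p)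
    (a b : EuclideanSpace ℝ (Fin k)) :
    (inner ℝ ((‖a‖ ^ (p - 2)) • a - (‖b‖ ^ (p - 2)) • b) (a - b) : ℝ) ≥
      (2 ^ (3 - p) / p) * ‖a - b‖ ^ p := by
  have hA : (0:ℝ) ≤ ‖a‖ := norm_nonneg a
  have hB : (0:ℝ) ≤ ‖b‖ := norm_nonneg b
  have hs : |(inner ℝ a b : ℝ)| ≤ ‖a‖ * ‖b‖ := abs_real_inner_le_norm a b
  have hexp : (inner ℝ ((‖a‖ ^ (p - 2)) • a - (‖b‖ ^ (p - 2)) • b) (a - b) : ℝ)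
      = ‖a‖ ^ (p - 2) * ‖a‖ ^ 2 + ‖b‖ ^ (p - 2) * ‖b‖ ^ 2
        - (‖a‖ ^ (p - 2) + ‖b‖ ^ (p - 2)) * (inner ℝ a b : ℝ) := by
    simp only [inner_sub_left, inner_sub_right, real_inner_smul_left,
      real_inner_self_eq_norm_sq, real_inner_comm b a]
    ring
  have collapse2 : ∀ x : ℝ, 0 ≤ x → x ^ (p - 2) * x ^ 2 = x ^ p := by
    intro x hx
    have h1 : x ^ (p - 2) * x = x ^ (p - 1) := by
      rw [rpow_succ_aux x hx (p - 2) (by linarith), show p - 2 + 1 = p - 1 by ring]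
    calc x ^ (p - 2) * x ^ 2 = x ^ (p - 2) * x * x := by ring
      _ = x ^ (p - 1) * x := by rw [h1]
      _ = x ^ p := rpow_pred_mul_aux x hx p (by linarith)
  have hnorm : ‖a - b‖ ^ p = (‖a‖ ^ 2 + ‖b‖ ^ 2 - 2 * (inner ℝ a b : ℝ)) ^ (p / 2) := by
    have h1 : ‖a - b‖ ^ 2 = ‖a‖ ^ 2 - 2 * (inner ℝ a b : ℝ) + ‖b‖ ^ 2 := norm_sub_sq_real a b
    have h2 : ((‖a - b‖ ^ 2 : ℝ)) ^ (p / 2) = ‖a - b‖ ^ p := by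
      rw [sq_rpow_half_aux, abs_of_nonneg (norm_nonneg _)]
    rw [← h2, h1, show ‖a‖ ^ 2 - 2 * (inner ℝ a b : ℝ) + ‖b‖ ^ 2
      = ‖a‖ ^ 2 + ‖b‖ ^ 2 - 2 * (inner ℝ a b : ℝ) by ring]
  rw [ge_iff_le, hexp, hnorm, collapse2 ‖a‖ hA, collapse2 ‖b‖ hB]
  exact key_aux p hp ‖a‖ ‖b‖ (inner ℝ a b) hA hB hs
end

section
/- Let k ≥ 1 be an integer and let p be a real number with 1 < p < 2. For all vectors a, b ∈ ℝ^k with (a, b) ≠ (0, 0), one has ⟨ |a|^{p−2} a − |b|^{p−2} b , a − b ⟩ ≥ (p−1) |a − b|² / ( |a| + |b| )^{2−p}. -/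
-- tangent line inequality for concave rpow
lemma bern_tangent {q A B : ℝ} (hq0 : 0 < q) (hq1 : q < 1) (hA : 0 < A) (hB : 0 ≤ B) :
    B ^ q ≤ A ^ q + q * A ^ (q - 1) * (B - A) := by
  have hs : (-1:ℝ) ≤ B / A - 1 := by
    have : (0:ℝ) ≤ B / A := div_nonneg hB hA.le
    linarith
  have h := rpow_one_add_le_one_add_mul_self hs hq0.le hq1.le
  rw [add_sub_cancel] at h
  have hApos : (0:ℝ) < A ^ q := Real.rpow_pos_of_pos hA q
  have h2 := mul_le_mul_of_nonneg_left h hApos.le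
  have hdiv : (B / A) ^ q = B ^ q / A ^ q := Real.div_rpow hB hA.le q
  rw [hdiv] at h2
  have hAq1 : A ^ (q - 1) = A ^ q / A := by
    rw [Real.rpow_sub hA, Real.rpow_one]
  calc B ^ q = A ^ q * (B ^ q / A ^ q) := by field_simp
    _ ≤ A ^ q * (1 + q * (B / A - 1)) := h2
    _ = A ^ q + q * (A ^ q / A) * (B - A) := by field_simp
    _ = A ^ q + q * A ^ (q - 1) * (B - A) := by rw [hAq1]

-- scalar inequality, WLOG case
lemma scalar_key {q A B : ℝ} (hq0 : 0 < q) (hq1 : q < 1) (hB : 0 ≤ B) (hBA : B ≤ A)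
    (hA : 0 < A) : q * (A + B) ^ (q - 1) * (A - B) ≤ A ^ q - B ^ q := by
  have h1 := bern_tangent hq0 hq1 hA hB
  have h2 : (A + B) ^ (q - 1) ≤ A ^ (q - 1) :=
    Real.rpow_le_rpow_of_nonpos hA (by linarith) (by linarith)
  nlinarith [mul_le_mul_of_nonneg_left h2 (mul_nonneg hq0.le (by linarith : (0:ℝ) ≤ A - B))]

-- symmetric version
lemma scalar_sym {q A B : ℝ} (hq0 : 0 < q) (hq1 : q < 1) (hA : 0 ≤ A) (hB : 0 ≤ B)
    (hAB : 0 < A + B) : q * (A + B) ^ (q - 1) * (A - B) ^ 2 ≤ (A ^ q - B ^ q) * (A - B) := by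
  rcases le_total B A with h | h
  · have hA' : 0 < A := by linarith [hAB]; 
    nlinarith [scalar_key hq0 hq1 hB h hA', sq_nonneg (A-B)]
  · have hB' : 0 < B := by linarith
    have := scalar_key hq0 hq1 hA h hB'
    have e : (A + B) = (B + A) := by ring
    rw [e]
    nlinarith [this]

set_option maxHeartbeats 1000000 in
/-- Monotonicity inequality for the `p`-Laplacian vector field, case `1 < p < 2`. -/
theorem p_laplacian_monotonicity_small_p (k : ℕ) (hk : 1 ≤ k) (p : ℝ)
    (hp1 : 1 < p) (hp2 : p < 2)
    (a b : EuclideanSpace ℝ (Fin k)) (hab : (a, b) ≠ (0, 0)) :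
    (inner ℝ ((‖a‖ ^ (p - 2)) • a - (‖b‖ ^ (p - 2)) • b) (a - b) : ℝ) ≥
      (p - 1) * ‖a - b‖ ^ 2 / (‖a‖ + ‖b‖) ^ (2 - p) := by
  set A := ‖a‖ with hAdef
  set B := ‖b‖ with hBdef
  have hA0 : 0 ≤ A := norm_nonneg a
  have hB0 : 0 ≤ B := norm_nonneg b
  have hABpos : 0 < A + B := by
    rcases lt_or_eq_of_le (by positivity : (0:ℝ) ≤ A + B) with h | h
    · exact h
    · exfalso; apply hab
      have ha : A = 0 := by linarith
      have hb : B = 0 := by linarith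
      have ha' : a = 0 := norm_eq_zero.mp ha
      have hb' : b = 0 := norm_eq_zero.mp hb
      simp [ha', hb']
  have hSpos : (0:ℝ) < (A + B) ^ (2 - p) := Real.rpow_pos_of_pos hABpos _
  have hone : (A + B) ^ (p - 2) * (A + B) ^ (2 - p) = 1 := by
    rw [← Real.rpow_add hABpos]; norm_num
  have hrhs : (p - 1) * ‖a - b‖ ^ 2 / (A + B) ^ (2 - p)
      = (p - 1) * (A + B) ^ (p - 2) * ‖a - b‖ ^ 2 := by
    rw [div_eq_iff hSpos.ne']
    linear_combination (-((p - 1) * ‖a - b‖ ^ 2)) * hone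
  rw [ge_iff_le, hrhs]
  have hinner : (inner ℝ ((A ^ (p - 2)) • a - (B ^ (p - 2)) • b) (a - b) : ℝ)
      = A ^ (p-2) * A ^ 2 + B ^ (p-2) * B ^ 2
        - (A ^ (p-2) + B ^ (p-2)) * (inner ℝ a b : ℝ) := by
    rw [inner_sub_left, inner_sub_right, inner_sub_right,
      real_inner_smul_left, real_inner_smul_left, real_inner_smul_left, real_inner_smul_left,
      real_inner_self_eq_norm_sq, real_inner_self_eq_norm_sq, real_inner_comm b a]
    ring
  have hnorm : ‖a - b‖ ^ 2 = A ^ 2 + B ^ 2 - 2 * (inner ℝ a b : ℝ) := by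
    rw [norm_sub_sq_real]; ring
  have ht : (inner ℝ a b : ℝ) ≤ A * B := real_inner_le_norm a b
  rw [hinner, hnorm]
  set t : ℝ := (inner ℝ a b : ℝ) with htdef
  set s := (A + B) ^ (p - 2) with hsdef
  have hs : 0 < s := Real.rpow_pos_of_pos hABpos _
  rcases eq_or_lt_of_le hA0 with hA | hA
  · -- A = 0, so a = 0, t = 0, B > 0
    have hB : 0 < B := by linarith
    have ht0 : t = 0 := by
      have ha' : a = 0 := norm_eq_zero.mp hA.symm
      simp [htdef, ha']
    have hA2 : A ^ (p-2) = 0 := by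
      rw [← hA, Real.zero_rpow (by intro h; linarith [sub_eq_zero.mp h] : p - 2 ≠ 0)]
    have hsB : s = B ^ (p - 2) := by rw [hsdef, ← hA, zero_add]
    have hd : 0 < B ^ (p - 2) := Real.rpow_pos_of_pos hB _
    have h1 : (p - 1) * (B ^ (p-2) * B ^ 2) ≤ 1 * (B ^ (p-2) * B ^ 2) :=
      mul_le_mul_of_nonneg_right (by linarith) (by positivity)
    rw [ht0, hA2, hsB, ← hA]
    nlinarith [h1]
  rcases eq_or_lt_of_le hB0 with hB | hB
  · -- B = 0, so b = 0
    have ht0 : t = 0 := by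
      have hb' : b = 0 := norm_eq_zero.mp hB.symm
      simp [htdef, hb']
    have hB2 : B ^ (p-2) = 0 := by
      rw [← hB, Real.zero_rpow (by intro h; linarith [sub_eq_zero.mp h] : p - 2 ≠ 0)]
    have hsA : s = A ^ (p - 2) := by rw [hsdef, ← hB, add_zero]
    have hc : 0 < A ^ (p - 2) := Real.rpow_pos_of_pos hA _
    have h1 : (p - 1) * (A ^ (p-2) * A ^ 2) ≤ 1 * (A ^ (p-2) * A ^ 2) :=
      mul_le_mul_of_nonneg_right (by linarith) (by positivity)
    rw [ht0, hB2, hsA, ← hB]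
    nlinarith [h1]
  -- main case: A > 0, B > 0
  have hcA : A ^ (p-2) * A = A ^ (p-1) := by
    rw [← Real.rpow_add_one hA.ne']; congr 1; ring
  have hcB : B ^ (p-2) * B = B ^ (p-1) := by
    rw [← Real.rpow_add_one hB.ne']; congr 1; ring
  have hcA2 : A ^ (p-2) * A ^ 2 = A ^ (p-1) * A := by
    rw [pow_two, ← mul_assoc, hcA]
  have hcB2 : B ^ (p-2) * B ^ 2 = B ^ (p-1) * B := by
    rw [pow_two, ← mul_assoc, hcB]
  have hcAB : A ^ (p-2) * (A * B) = A ^ (p-1) * B := by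
    rw [← mul_assoc, hcA]
  have hcBA : B ^ (p-2) * (A * B) = B ^ (p-1) * A := by
    rw [mul_comm A B, ← mul_assoc, hcB]
  have hgeA : s ≤ A ^ (p - 2) :=
    Real.rpow_le_rpow_of_nonpos hA (by linarith) (by linarith)
  have hgeB : s ≤ B ^ (p - 2) :=
    Real.rpow_le_rpow_of_nonpos hB (by linarith) (by linarith)
  have hkey := scalar_sym (q := p - 1) (A := A) (B := B)
    (by linarith) (by linarith) hA0 hB0 hABpos
  have hexp : (A + B) ^ (p - 1 - 1) = s := by
    rw [hsdef]; ring_nf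
  rw [hexp] at hkey
  have hslope : 0 ≤ A ^ (p-2) + B ^ (p-2) - 2 * (p - 1) * s := by
    have h2 : (p - 1) * s ≤ 1 * s := mul_le_mul_of_nonneg_right (by linarith) hs.le
    linarith
  have E1 : 0 ≤ (A * B - t) * (A ^ (p-2) + B ^ (p-2) - 2 * (p - 1) * s) :=
    mul_nonneg (by linarith) hslope
  rw [hcA2, hcB2]
  nlinarith [E1, hkey, hcAB, hcBA]
end
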